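/- arXiv:1904.02581 — 6 statements merged into one kernel-verified Lean document; each statement's English description precedes it below -/
import Mathlib

section
/- For any integers m ≥ n ≥ 2, the rectangular supergrid graph R(m,n) contains a Hamiltonian cycle. -/
open SimpleGraph

/-- The infinite supergrid graph on ℤ²: distinct points adjacent iff both
coordinate differences are at most 1. -/
def SG : SimpleGraph (ℤ × ℤ) where
  Adj u v := u ≠ v ∧ |u.1 - v.1| ≤ 1 ∧ |u.2 - v.2| ≤ 1
  symm := by
    constructor
    intro u v h
    exact ⟨h.1.symm, by rw [abs_sub_comm]; exact h.2.1, by rw [abs_sub_comm]; exact h.2.2⟩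
  loopless := by constructor; intro u h; exact h.1 rfl

/-- Vertex set of the rectangular supergrid graph R(m,n). -/
def RectSet (m n : ℤ) : Set (ℤ × ℤ) := {p | 1 ≤ p.1 ∧ p.1 ≤ m ∧ 1 ≤ p.2 ∧ p.2 ≤ n}

/-- The rectangular supergrid graph R(m,n). -/
def Rect (m n : ℤ) : SimpleGraph (RectSet m n) := SG.induce (RectSet m n)

/-- Vertex set of the L-shaped supergrid graph L(m,n;k,l): the rectangle
R(m,n) with the rectangle R(k,l) removed from the upper-right corner. -/
def LSet (m n k l : ℤ) : Set (ℤ × ℤ) :=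
  {p | (1 ≤ p.1 ∧ p.1 ≤ m ∧ 1 ≤ p.2 ∧ p.2 ≤ n) ∧ ¬ (m - k + 1 ≤ p.1 ∧ p.2 ≤ l)}

/-- The L-shaped supergrid graph L(m,n;k,l). -/
def LG (m n k l : ℤ) : SimpleGraph (LSet m n k l) := SG.induce (LSet m n k l)

namespace HamAux


/-- Build a walk from a chain of adjacencies. -/
def mkWalk {V : Type*} {G : SimpleGraph V} :
    (v u : V) → (l : List V) → List.Chain G.Adj v (l ++ [u]) → G.Walk v u
  | _, _, [], h => Walk.cons (List.chain_cons.mp h).1 Walk.nil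
  | _, u, a :: l, h =>
      Walk.cons (List.chain_cons.mp h).1 (mkWalk a u l (List.chain_cons.mp h).2)

lemma mkWalk_support {V : Type*} {G : SimpleGraph V} (v u : V) (l : List V)
    (h : List.Chain G.Adj v (l ++ [u])) :
    (mkWalk v u l h).support = v :: (l ++ [u]) := by
  induction l generalizing v with
  | nil => simp [mkWalk]
  | cons a l ih => simp [mkWalk]; exact ih _ _

/-- The data of a cyclic hamiltonian enumeration. -/
def goodList (m n : ℤ) (L : List (ℤ × ℤ)) : Prop :=
  L.Nodup ∧ (∀ p, p ∈ L ↔ p ∈ RectSet m n) ∧ List.Chain' SG.Adj L ∧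
    ∀ x ∈ L.getLast?, ∀ y ∈ L.head?, SG.Adj x y

lemma ham_of_goodList {m n : ℤ} (hn : 2 ≤ n) (hm : 2 ≤ m) {L : List (ℤ × ℤ)}
    (h : goodList m n L) :
    ∃ (v : RectSet m n) (c : (Rect m n).Walk v v), c.IsHamiltonianCycle := by
  classical
  obtain ⟨hnd, hmem, hch, hwrap⟩ := h
  have hsub : ∀ p ∈ L, p ∈ RectSet m n := fun p hp => (hmem p).1 hp
  set L' : List (RectSet m n) := L.pmap (fun p hp => (⟨p, hp⟩ : RectSet m n)) hsub with hL'
  have hmap : L'.map Subtype.val = L := by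
    rw [hL', List.map_pmap]
    exact (List.pmap_eq_map _).trans (List.map_id _)
  -- length ≥ 3
  have hlen : 3 ≤ L.length := by
    have hsp : ([((1:ℤ),(1:ℤ)), ((2:ℤ),(1:ℤ)), ((2:ℤ),(2:ℤ))]).Subperm L := by
      apply List.subperm_of_subset
      · decide
      · intro x hx
        simp only [List.mem_cons, List.not_mem_nil, or_false] at hx
        rcases hx with rfl | rfl | rfl <;>
          exact (hmem _).2 (by constructor <;> simp <;> omega)
    simpa using hsp.length_le
  have hlen' : 3 ≤ L'.length := by
    have : L'.length = L.length := by rw [← hmap, List.length_map]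
    omega
  -- transfer structure to the subtype list
  have hnd' : L'.Nodup := by
    have := hnd; rw [← hmap] at this; exact this.of_map
  have hch' : List.Chain' (Rect m n).Adj L' := by
    have : List.Chain' SG.Adj (L'.map Subtype.val) := by rw [hmap]; exact hch
    unfold List.Chain' at this; rw [List.isChain_map] at this
    exact this.imp (fun a b hab => hab)
  have hcov' : ∀ w : RectSet m n, w ∈ L' := by
    intro w
    have hw : (w : ℤ × ℤ) ∈ L := (hmem w).2 w.2
    rw [hL']
    exact List.mem_pmap.mpr ⟨w.1, hw, rfl⟩
  -- destructure
  match L', hlen', hnd', hch', hcov' with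
  | v :: a :: b :: t, hlen', hnd', hch', hcov' =>
  set l : List (RectSet m n) := b :: t with hl
  have hwrap' : ∀ x ∈ (v :: a :: l).getLast?, (Rect m n).Adj x v := by
    intro x hx
    have hxL : x.val ∈ L.getLast? := by
      rw [← hmap, List.getLast?_map]
      exact Option.mem_map_of_mem _ hx
    have hvL : v.val ∈ L.head? := by
      rw [← hmap, List.head?_map]
      exact Option.mem_map_of_mem _ rfl
    exact hwrap _ hxL _ hvL
  -- chain all the way around
  have hchain : List.Chain ((Rect m n).Adj) v ((a :: l) ++ [v]) := by
    have : List.Chain' ((Rect m n).Adj) ((v :: a :: l) ++ [v]) := by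
      unfold List.Chain'; rw [List.isChain_append]
      refine ⟨hch', List.isChain_singleton v, ?_⟩
      intro x hx y hy
      simp only [List.head?_cons, Option.mem_some_iff] at hy
      subst hy
      exact hwrap' x hx
    exact this
  have hva : (Rect m n).Adj v a := (List.chain_cons.mp hchain).1
  have hchain2 : List.Chain ((Rect m n).Adj) a (l ++ [v]) := (List.chain_cons.mp hchain).2
  set p : (Rect m n).Walk a v := mkWalk a v l hchain2 with hp
  have hpsupp : p.support = a :: (l ++ [v]) := mkWalk_support _ _ _ _
  -- nodup facts
  have hndl : v ∉ (a :: l) ∧ (a :: l).Nodup := by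
    rw [List.nodup_cons] at hnd'; exact hnd'
  have hpnodup : p.support.Nodup := by
    rw [hpsupp]
    have : (a :: (l ++ [v])) = (a :: l) ++ [v] := by simp
    rw [this, List.nodup_append]
    refine ⟨hndl.2, List.nodup_singleton v, ?_⟩
    intro x hx
    simp only [List.mem_singleton]
    rintro _ rfl hxv; subst hxv; exact hndl.1 hx
  have hppath : p.IsPath := Walk.IsPath.mk' hpnodup
  set c : (Rect m n).Walk v v := Walk.cons hva p with hc
  have hcyc : c.IsCycle := by
    rw [hc, Walk.cons_isCycle_iff]
    refine ⟨hppath, ?_⟩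
    intro hedge
    have hpq : p = Walk.cons (List.chain_cons.mp hchain2).1
        (mkWalk b v t (List.chain_cons.mp hchain2).2) := rfl
    rw [hpq, Walk.edges_cons] at hedge
    rcases List.mem_cons.mp hedge with heq | hmem2
    · rw [Sym2.eq_iff] at heq
      have hvni : v ∉ (a :: b :: t) := hndl.1
      rcases heq with ⟨h1, _⟩ | ⟨h1, h2⟩
      · exact hvni (by rw [h1]; exact List.mem_cons_self)
      · exact hvni (by rw [h1]; exact List.mem_cons_of_mem _ List.mem_cons_self)
    · have ha : a ∈ (mkWalk b v t (List.chain_cons.mp hchain2).2).support :=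
        Walk.snd_mem_support_of_mem_edges _ hmem2
      have : p.support = a :: (mkWalk b v t (List.chain_cons.mp hchain2).2).support := by
        rw [hpq, Walk.support_cons]
      rw [this, List.nodup_cons] at hpnodup
      exact hpnodup.1 ha
  refine ⟨v, c, ?_⟩
  rw [Walk.isHamiltonianCycle_iff_isCycle_and_support_count_tail_eq_one]
  refine ⟨hcyc, ?_⟩
  intro w
  have htail : c.support.tail = (a :: l) ++ [v] := by
    rw [hc, Walk.support_cons, List.tail_cons, hpsupp]; simp
  rw [htail, @List.count_append _ instBEqOfDecidableEq]
  by_cases hwv : w = v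
  · subst hwv
    rw [@List.count_eq_zero_of_not_mem _ instBEqOfDecidableEq _ _ _ hndl.1]
    simp
  · have hwmem : w ∈ a :: l := by
      have := hcov' w
      rcases List.mem_cons.mp this with h | h
      · exact absurd h hwv
      · exact h
    rw [@List.count_eq_one_of_mem _ instBEqOfDecidableEq _ _ _ hndl.2 hwmem]
    simp [hwv]; exact @List.count_eq_zero_of_not_mem _ instBEqOfDecidableEq _ _ _ (by simpa using hwv)



lemma sgAdj {p q : ℤ × ℤ} (h1 : ¬(p.1 = q.1 ∧ p.2 = q.2))
    (h2 : -1 ≤ p.1 - q.1 ∧ p.1 - q.1 ≤ 1) (h4 : -1 ≤ p.2 - q.2 ∧ p.2 - q.2 ≤ 1) :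
    SG.Adj p q :=
  ⟨fun e => h1 (by rw [e]; exact ⟨rfl, rfl⟩), abs_le.2 h2, abs_le.2 h4⟩

def seg (f : ℕ → ℤ × ℤ) (k : ℕ) : List (ℤ × ℤ) := (List.range k).map f

lemma seg_head {f : ℕ → ℤ × ℤ} {k : ℕ} (hk : 0 < k) : (seg f k).head? = some (f 0) := by
  obtain ⟨j, rfl⟩ := Nat.exists_eq_add_of_lt hk
  rw [seg, Nat.zero_add, List.range_succ_eq_map]
  simp

lemma seg_last {f : ℕ → ℤ × ℤ} {k : ℕ} (hk : 0 < k) : (seg f k).getLast? = some (f (k-1)) := by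
  obtain ⟨j, rfl⟩ := Nat.exists_eq_add_of_lt hk
  rw [seg, Nat.zero_add, List.range_succ, List.map_append]
  simp [List.getLast?_concat]

lemma seg_chain {f : ℕ → ℤ × ℤ} {k : ℕ} (h : ∀ i, i + 1 < k → SG.Adj (f i) (f (i+1))) :
    List.Chain' SG.Adj (seg f k) := by
  rw [seg]; unfold List.Chain'; rw [List.isChain_map]
  match k with
  | 0 => simp
  | (j+1) =>
    rw [List.isChain_range_succ]
    intro i hi
    exact h i (by omega)

lemma seg_nodup {f : ℕ → ℤ × ℤ} {k : ℕ} (hf : ∀ i < k, ∀ j < k, f i = f j → i = j) :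
    (seg f k).Nodup := by
  refine List.Nodup.map_on ?_ List.nodup_range
  intro i hi j hj
  rw [List.mem_range] at hi hj
  exact hf i hi j hj

lemma seg_mem {f : ℕ → ℤ × ℤ} {k : ℕ} {p : ℤ × ℤ} :
    p ∈ seg f k ↔ ∃ i, i < k ∧ f i = p := by
  simp [seg, List.mem_map, List.mem_range]

def piece (L : List (ℤ × ℤ)) (a b : ℤ × ℤ) (P : ℤ × ℤ → Prop) : Prop :=
  L.head? = some a ∧ L.getLast? = some b ∧ List.Chain' SG.Adj L ∧ L.Nodup ∧ ∀ p, p ∈ L ↔ P p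

lemma piece.congr {L a b} {P Q : ℤ × ℤ → Prop} (h : piece L a b P) (hPQ : ∀ p, P p ↔ Q p) :
    piece L a b Q :=
  ⟨h.1, h.2.1, h.2.2.1, h.2.2.2.1, fun p => (h.2.2.2.2 p).trans (hPQ p)⟩

lemma piece.append {L₁ L₂ a b c d} {P Q : ℤ × ℤ → Prop}
    (h1 : piece L₁ a b P) (h2 : piece L₂ c d Q) (hadj : SG.Adj b c)
    (hdisj : ∀ p, P p → Q p → False) :
    piece (L₁ ++ L₂) a d (fun p => P p ∨ Q p) := by
  obtain ⟨hh1, hl1, hc1, hn1, hm1⟩ := h1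
  obtain ⟨hh2, hl2, hc2, hn2, hm2⟩ := h2
  refine ⟨?_, ?_, ?_, ?_, ?_⟩
  · rw [List.head?_append, hh1]; rfl
  · rw [List.getLast?_append, hl2]; rfl
  · unfold List.Chain'; rw [List.isChain_append]
    refine ⟨hc1, hc2, ?_⟩
    intro x hx y hy
    rw [hl1, Option.mem_some_iff] at hx
    rw [hh2, Option.mem_some_iff] at hy
    subst hx; subst hy; exact hadj
  · rw [List.nodup_append]
    refine ⟨hn1, hn2, ?_⟩
    intro x hx y hx2 hxy; subst hxy
    exact hdisj x ((hm1 x).1 hx) ((hm2 x).1 hx2)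
  · intro p
    rw [List.mem_append, hm1, hm2]

def colU (n : ℕ) (x : ℤ) : List (ℤ × ℤ) := seg (fun j => (x, (j : ℤ) + 2)) (n - 1)
def colD (n : ℕ) (x : ℤ) : List (ℤ × ℤ) := seg (fun j => (x, (n : ℤ) - (j : ℤ))) (n - 1)
def row1R (m : ℕ) : List (ℤ × ℤ) := seg (fun j => ((m : ℤ) - (j : ℤ), 1)) m
def zig (n : ℕ) : List (ℤ × ℤ) :=
  seg (fun j => ((j % 2 : ℕ) + 1, ((j / 2 : ℕ) : ℤ) + 2)) (2 * (n - 1))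

lemma colU_piece {n : ℕ} (hn : 2 ≤ n) (x : ℤ) :
    piece (colU n x) (x, 2) (x, (n : ℤ)) (fun p => p.1 = x ∧ 2 ≤ p.2 ∧ p.2 ≤ (n : ℤ)) := by
  have hk : 0 < n - 1 := by omega
  refine ⟨by rw [colU, seg_head hk]; norm_num, ?_, ?_, ?_, ?_⟩
  · rw [colU, seg_last hk]
    have : ((n - 1 - 1 : ℕ) : ℤ) + 2 = (n : ℤ) := by omega
    rw [this]
  · exact seg_chain (fun i hi => sgAdj (by simp <;> omega) (by simp) (by simp <;> omega))
  · exact seg_nodup (fun i hi j hj he => by simp [Prod.ext_iff] at he; omega)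
  · intro p
    rw [colU, seg_mem]
    constructor
    · rintro ⟨i, hi, rfl⟩
      refine ⟨rfl, by simp, by simp <;> omega⟩
    · rintro ⟨h1, h2, h3⟩
      refine ⟨(p.2 - 2).toNat, by omega, ?_⟩
      rw [Prod.ext_iff]
      constructor
      · simpa using h1.symm
      · simp <;> omega

lemma colD_piece {n : ℕ} (hn : 2 ≤ n) (x : ℤ) :
    piece (colD n x) (x, (n : ℤ)) (x, 2) (fun p => p.1 = x ∧ 2 ≤ p.2 ∧ p.2 ≤ (n : ℤ)) := by
  have hk : 0 < n - 1 := by omega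
  refine ⟨?_, ?_, ?_, ?_, ?_⟩
  · rw [colD, seg_head hk]; simp
  · rw [colD, seg_last hk]
    have : (n : ℤ) - ((n - 1 - 1 : ℕ) : ℤ) = 2 := by omega
    rw [this]
  · exact seg_chain (fun i hi => sgAdj (by simp <;> omega) (by simp) (by simp <;> omega))
  · exact seg_nodup (fun i hi j hj he => by simp [Prod.ext_iff] at he; omega)
  · intro p
    rw [colD, seg_mem]
    constructor
    · rintro ⟨i, hi, rfl⟩
      refine ⟨rfl, by simp <;> omega, by simp <;> omega⟩
    · rintro ⟨h1, h2, h3⟩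
      refine ⟨((n : ℤ) - p.2).toNat, by omega, ?_⟩
      rw [Prod.ext_iff]
      constructor
      · simpa using h1.symm
      · simp <;> omega

lemma row1R_piece {m : ℕ} (hm : 1 ≤ m) :
    piece (row1R m) ((m : ℤ), 1) (1, 1) (fun p => 1 ≤ p.1 ∧ p.1 ≤ (m : ℤ) ∧ p.2 = 1) := by
  refine ⟨?_, ?_, ?_, ?_, ?_⟩
  · rw [row1R, seg_head (by omega)]; simp
  · rw [row1R, seg_last (by omega)]
    have : (m : ℤ) - ((m - 1 : ℕ) : ℤ) = 1 := by omega
    rw [this]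
  · exact seg_chain (fun i hi => sgAdj (by simp <;> omega) (by simp <;> omega) (by simp))
  · exact seg_nodup (fun i hi j hj he => by simp [Prod.ext_iff] at he; omega)
  · intro p
    rw [row1R, seg_mem]
    constructor
    · rintro ⟨i, hi, rfl⟩
      refine ⟨by simp <;> omega, by simp <;> omega, rfl⟩
    · rintro ⟨h1, h2, h3⟩
      refine ⟨((m : ℤ) - p.1).toNat, by omega, ?_⟩
      rw [Prod.ext_iff]
      constructor
      · simp <;> omega
      · simpa using h3.symm

lemma zig_piece {n : ℕ} (hn : 2 ≤ n) :
    piece (zig n) (1, 2) (2, (n : ℤ))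
      (fun p => (p.1 = 1 ∨ p.1 = 2) ∧ 2 ≤ p.2 ∧ p.2 ≤ (n : ℤ)) := by
  have hk : 0 < 2 * (n - 1) := by omega
  refine ⟨?_, ?_, ?_, ?_, ?_⟩
  · rw [zig, seg_head hk]; norm_num
  · rw [zig, seg_last hk]
    have h1 : (2 * (n - 1) - 1) % 2 = 1 := by omega
    have h2 : (2 * (n - 1) - 1) / 2 = n - 2 := by omega
    rw [h1, h2]
    have : ((n - 2 : ℕ) : ℤ) + 2 = (n : ℤ) := by omega
    rw [this]
    norm_num
  · refine seg_chain (fun i hi => sgAdj ?_ ?_ ?_) <;> simp <;> omega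
  · exact seg_nodup (fun i hi j hj he => by simp [Prod.ext_iff] at he; omega)
  · intro p
    rw [zig, seg_mem]
    constructor
    · rintro ⟨i, hi, rfl⟩
      refine ⟨?_, ?_, ?_⟩ <;> simp <;> omega
    · rintro ⟨h1, h2, h3⟩
      refine ⟨2 * (p.2 - 2).toNat + (p.1 - 1).toNat, by omega, ?_⟩
      rw [Prod.ext_iff]
      constructor
      · simp <;> omega
      · simp <;> omega



lemma piece.cast {L a b a' b'} {P : ℤ × ℤ → Prop} (h : piece L a b P)
    (ha : a = a') (hb : b = b') : piece L a' b' P := ha ▸ hb ▸ h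

def snake (n : ℕ) : ℤ → ℕ → List (ℤ × ℤ)
  | x, 0 => colD n x
  | x, q + 1 => colD n x ++ (colU n (x + 1) ++ snake n (x + 2) q)

lemma snake_piece {n : ℕ} (hn : 2 ≤ n) : ∀ (q : ℕ) (x : ℤ),
    piece (snake n x q) (x, (n : ℤ)) (x + 2 * q, 2)
      (fun p => x ≤ p.1 ∧ p.1 ≤ x + 2 * q ∧ 2 ≤ p.2 ∧ p.2 ≤ (n : ℤ)) := by
  intro q
  induction q with
  | zero =>
    intro x
    refine ((colD_piece hn x).congr ?_).cast rfl (by norm_num)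
    intro p
    constructor
    · rintro ⟨h1, h2, h3⟩
      refine ⟨le_of_eq h1.symm, ?_, h2, h3⟩
      push_cast; omega
    · rintro ⟨h1, h2, h3, h4⟩
      push_cast at h2
      exact ⟨by omega, h3, h4⟩
  | succ q ih =>
    intro x
    have hstep := ((colD_piece hn x).append
      ((colU_piece hn (x + 1)).append (ih (x + 2))
        (sgAdj (by simp <;> omega) (by simp <;> omega) (by simp <;> omega))
        (by rintro p ⟨h1, -, -⟩ ⟨h2, -, -, -⟩; omega))
      (sgAdj (by simp <;> omega) (by simp <;> omega) (by simp <;> omega))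
      (by rintro p ⟨h1, -, -⟩ (⟨h2, -, -⟩ | ⟨h2, -, -, -⟩) <;> omega))
    refine (hstep.cast rfl ?_).congr ?_
    · have : x + 2 + 2 * ((q : ℕ) : ℤ) = x + 2 * (((q + 1 : ℕ)) : ℤ) := by push_cast; ring
      rw [this]
    · intro p
      push_cast
      constructor
      · rintro (⟨h1, h2, h3⟩ | ⟨h1, h2, h3⟩ | ⟨h1, h2, h3, h4⟩) <;>
          exact ⟨by omega, by omega, by omega, by omega⟩
      · rintro ⟨h1, h2, h3, h4⟩
        rcases lt_trichotomy p.1 (x + 1) with h | h | h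
        · exact Or.inl ⟨by omega, h3, h4⟩
        · exact Or.inr (Or.inl ⟨by omega, h3, h4⟩)
        · exact Or.inr (Or.inr ⟨by omega, by omega, h3, h4⟩)

lemma goodList_of_piece {m n : ℤ} {L : List (ℤ × ℤ)}
    (h : piece L (1, 2) (1, 1) (fun p => p ∈ RectSet m n)) :
    goodList m n L := by
  obtain ⟨hh, hl, hc, hnd, hm⟩ := h
  refine ⟨hnd, hm, hc, ?_⟩
  intro x hx y hy
  rw [hl, Option.mem_some_iff] at hx
  rw [hh, Option.mem_some_iff] at hy
  subst hx; subst hy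
  exact sgAdj (by simp) (by simp) (by simp)

lemma mem_RectSet {m n : ℤ} {p : ℤ × ℤ} :
    p ∈ RectSet m n ↔ 1 ≤ p.1 ∧ p.1 ≤ m ∧ 1 ≤ p.2 ∧ p.2 ≤ n := Iff.rfl

lemma goodA {n : ℕ} (hn : 2 ≤ n) (q : ℕ) :
    goodList (2 + 2 * (q : ℤ)) (n : ℤ)
      (colU n 1 ++ (snake n 2 q ++ row1R (2 + 2 * q))) := by
  have h3 := (row1R_piece (m := 2 + 2 * q) (by omega)).cast
      (a' := (2 + 2 * (q : ℤ), 1))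
      (by rw [Prod.ext_iff]; exact ⟨by push_cast; ring, rfl⟩) rfl
  have hstep := ((colU_piece hn 1).append
    ((snake_piece hn q 2).append h3
      (sgAdj (by simp <;> omega) (by simp <;> omega) (by simp <;> omega))
      (by rintro p ⟨-, -, h1, -⟩ ⟨-, -, h2⟩; push_cast at *; omega))
    (sgAdj (by simp <;> omega) (by simp <;> omega) (by simp <;> omega))
    (by rintro p ⟨h1, h1b, h1c⟩ (⟨h2, h2b, h2c, h2d⟩ | ⟨h2, h2b, h2c⟩) <;> push_cast at * <;> omega))
  refine goodList_of_piece (hstep.congr ?_)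
  intro p
  rw [mem_RectSet]
  push_cast
  constructor
  · rintro (⟨h1, h2, h3⟩ | ⟨h1, h2, h3, h4⟩ | ⟨h1, h2, h3⟩) <;>
      exact ⟨by omega, by omega, by omega, by omega⟩
  · rintro ⟨h1, h2, h3, h4⟩
    rcases eq_or_lt_of_le h3 with h | h
    · exact Or.inr (Or.inr ⟨by omega, by omega, by omega⟩)
    · rcases lt_trichotomy p.1 2 with h' | h' | h'
      · exact Or.inl ⟨by omega, by omega, by omega⟩
      · exact Or.inr (Or.inl ⟨by omega, by omega, by omega, by omega⟩)
      · exact Or.inr (Or.inl ⟨by omega, by omega, by omega, by omega⟩)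

lemma goodB {n : ℕ} (hn : 2 ≤ n) (q : ℕ) :
    goodList (3 + 2 * (q : ℤ)) (n : ℤ)
      (zig n ++ (snake n 3 q ++ row1R (3 + 2 * q))) := by
  have h3 := (row1R_piece (m := 3 + 2 * q) (by omega)).cast
      (a' := (3 + 2 * (q : ℤ), 1))
      (by rw [Prod.ext_iff]; exact ⟨by push_cast; ring, rfl⟩) rfl
  have hstep := ((zig_piece hn).append
    ((snake_piece hn q 3).append h3
      (sgAdj (by simp <;> omega) (by simp <;> omega) (by simp <;> omega))
      (by rintro p ⟨-, -, h1, -⟩ ⟨-, -, h2⟩; push_cast at *; omega))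
    (sgAdj (by simp <;> omega) (by simp <;> omega) (by simp <;> omega))
    (by rintro p ⟨h1, h1b, h1c⟩ (⟨h2, h2b, h2c, h2d⟩ | ⟨h2, h2b, h2c⟩) <;> push_cast at * <;> omega))
  refine goodList_of_piece (hstep.congr ?_)
  intro p
  rw [mem_RectSet]
  push_cast
  constructor
  · rintro (⟨h1, h2, h3⟩ | ⟨h1, h2, h3, h4⟩ | ⟨h1, h2, h3⟩) <;>
      exact ⟨by omega, by omega, by omega, by omega⟩
  · rintro ⟨h1, h2, h3, h4⟩
    rcases eq_or_lt_of_le h3 with h | h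
    · exact Or.inr (Or.inr ⟨by omega, by omega, by omega⟩)
    · rcases lt_trichotomy p.1 3 with h' | h' | h'
      · exact Or.inl ⟨by omega, by omega, by omega⟩
      · exact Or.inr (Or.inl ⟨by omega, by omega, by omega, by omega⟩)
      · exact Or.inr (Or.inl ⟨by omega, by omega, by omega, by omega⟩)

end HamAux

/-- For m ≥ n ≥ 2, R(m,n) contains a Hamiltonian cycle. -/
theorem stmt_0 (m n : ℤ) (hn : 2 ≤ n) (hmn : n ≤ m) :
    ∃ (v : RectSet m n) (c : (Rect m n).Walk v v), c.IsHamiltonianCycle := by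
  have hm : 2 ≤ m := le_trans hn hmn
  obtain ⟨N, hN⟩ : ∃ N : ℕ, (N : ℤ) = n := ⟨n.toNat, by omega⟩
  have hN2 : 2 ≤ N := by omega
  rcases Int.even_or_odd m with he | ho
  · obtain ⟨r, hr⟩ := he
    obtain ⟨q, hq⟩ : ∃ q : ℕ, m = 2 + 2 * (q : ℤ) := ⟨(r - 1).toNat, by omega⟩
    have hg := HamAux.goodA hN2 q
    rw [← hq, hN] at hg
    exact HamAux.ham_of_goodList hn hm hg
  · obtain ⟨r, hr⟩ := ho
    obtain ⟨q, hq⟩ : ∃ q : ℕ, m = 3 + 2 * (q : ℤ) := ⟨(r - 1).toNat, by omega⟩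
    have hg := HamAux.goodB hN2 q
    rw [← hq, hN] at hg
    exact HamAux.ham_of_goodList hn hm hg
end

section
/- Let R(m,2) be a rectangular supergrid graph with m ≥ 2, and let s=(s_x,s_y), t=(t_x,t_y) be distinct vertices with s_x = t_x and 2 ≤ s_x ≤ m−1. Then {s,t} is a vertex cut of R(m,2), and consequently R(m,2) has no Hamiltonian (s,t)-path. -/
open SimpleGraph

namespace StmtAux

lemma col_eq {m : ℤ} {s t : RectSet m 2} (hst : s ≠ t) (hx : s.val.1 = t.val.1)
    (v : RectSet m 2) (hv : v.val.1 = s.val.1) : v = s ∨ v = t := by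
  obtain ⟨_, _, hsy1, hsy2⟩ := s.2
  obtain ⟨_, _, hty1, hty2⟩ := t.2
  obtain ⟨_, _, hvy1, hvy2⟩ := v.2
  have hne : s.val.2 ≠ t.val.2 := by
    intro h
    exact hst (Subtype.ext (Prod.ext hx h))
  have : v.val.2 = s.val.2 ∨ v.val.2 = t.val.2 := by omega
  rcases this with h | h
  · exact Or.inl (Subtype.ext (Prod.ext hv h))
  · exact Or.inr (Subtype.ext (Prod.ext (hv.trans hx) h))

lemma key {m c : ℤ} : ∀ {u v : RectSet m 2} (q : (Rect m 2).Walk u v),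
    u.val.1 < c → c < v.val.1 → ∃ z ∈ q.support, z.val.1 = c := by
  intro u v q
  induction q with
  | nil => intro h1 h2; omega
  | @cons u x v h p ih =>
    intro h1 h2
    have h' : SG.Adj u.val x.val := h
    have hd : |u.val.1 - x.val.1| ≤ 1 := h'.2.1
    by_cases hc : x.val.1 = c
    · exact ⟨x, by simp [Walk.support_cons], hc⟩
    · have hx : x.val.1 < c := by
        rcases abs_le.mp hd with ⟨ha, hb⟩; omega
      obtain ⟨z, hz1, hz2⟩ := ih hx h2
      exact ⟨z, by simp [Walk.support_cons, hz1], hz2⟩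

lemma part1_aux {m : ℤ} {s t : RectSet m 2} (hst : s ≠ t) (hx : s.val.1 = t.val.1) :
    ∀ {u v : ({v | v ≠ s ∧ v ≠ t} : Set (RectSet m 2))}
      (_ : ((Rect m 2).induce {v | v ≠ s ∧ v ≠ t}).Walk u v),
      u.val.val.1 < s.val.1 → v.val.val.1 < s.val.1 := by
  intro u v q
  induction q with
  | nil => exact id
  | @cons u x v h p ih =>
    intro h1
    have h' : SG.Adj u.val.val x.val.val := h
    have hd : |u.val.val.1 - x.val.val.1| ≤ 1 := h'.2.1
    have hne : x.val.val.1 ≠ s.val.1 := by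
      intro hc
      rcases col_eq hst hx x.val hc with h | h
      · exact x.2.1 h
      · exact x.2.2 h
    apply ih
    rcases abs_le.mp hd with ⟨ha, hb⟩; omega

end StmtAux

/-- If s,t are distinct vertices of R(m,2) with s_x = t_x and 2 ≤ s_x ≤ m-1,
then {s,t} is a vertex cut of R(m,2) and there is no Hamiltonian (s,t)-path. -/
theorem stmt_2 (m : ℤ) (hm : 2 ≤ m) (s t : RectSet m 2) (hst : s ≠ t)
    (hx : s.val.1 = t.val.1) (h2 : 2 ≤ s.val.1) (hm1 : s.val.1 ≤ m - 1) :
    ¬ ((Rect m 2).induce {v | v ≠ s ∧ v ≠ t}).Connected ∧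
      ∀ w : (Rect m 2).Walk s t, ¬ (w.IsPath ∧ w.IsHamiltonian) := by
  classical
  set c := s.val.1 with hc
  -- corner vertices
  have haR : ((1 : ℤ), (1 : ℤ)) ∈ RectSet m 2 := ⟨le_refl 1, by omega, le_refl 1, by omega⟩
  have hbR : ((m : ℤ), (1 : ℤ)) ∈ RectSet m 2 := ⟨by omega, le_refl m, le_refl 1, by omega⟩
  set a : RectSet m 2 := ⟨(1, 1), haR⟩ with ha
  set b : RectSet m 2 := ⟨(m, 1), hbR⟩ with hb
  have hav : a.val.1 = 1 := rfl
  have hbv : b.val.1 = m := rfl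
  have has : a ≠ s := by
    intro h; have := congrArg (fun v : RectSet m 2 => v.val.1) h; simp only [hav] at this; omega
  have hat : a ≠ t := by
    intro h; have := congrArg (fun v : RectSet m 2 => v.val.1) h; simp only [hav] at this; omega
  have hbs : b ≠ s := by
    intro h; have := congrArg (fun v : RectSet m 2 => v.val.1) h; simp only [hbv] at this; omega
  have hbt : b ≠ t := by
    intro h; have := congrArg (fun v : RectSet m 2 => v.val.1) h; simp only [hbv] at this; omega
  constructor
  · intro hconn
    have hr := hconn.preconnected ⟨a, has, hat⟩ ⟨b, hbs, hbt⟩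
    obtain ⟨q⟩ := hr
    have := StmtAux.part1_aux hst hx q (by show a.val.1 < c; omega)
    rw [hbv] at this
    omega
  · rintro w ⟨hp, hh⟩
    have hmemA : a ∈ w.support := hh.mem_support a
    have hmemB : b ∈ w.support := hh.mem_support b
    have hnd : w.support.Nodup := hp.support_nodup
    set p1 := w.takeUntil a hmemA with hp1
    set p2 := w.dropUntil a hmemA with hp2
    have hspec : p1.append p2 = w := w.take_spec hmemA
    have hsupp : w.support = p1.support ++ p2.support.tail := by
      rw [← hspec, Walk.support_append]
    have hdisj : p1.support.Disjoint p2.support.tail := by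
      rw [hsupp] at hnd
      exact (List.nodup_append'.mp hnd).2.2
    have hsP1 : s ∈ p1.support := Walk.start_mem_support p1
    have hsnp2 : s ∉ p2.support := by
      intro h
      rcases List.mem_cons.mp (p2.support_eq_cons ▸ h) with h | h
      · exact has h.symm
      · exact hdisj hsP1 h
    have htp2 : t ∈ p2.support.tail := by
      have : t ∈ p2.support := Walk.end_mem_support p2
      rcases List.mem_cons.mp (p2.support_eq_cons ▸ this) with h | h
      · exact absurd h.symm hat
      · exact h
    have htnp1 : t ∉ p1.support := fun h => hdisj h htp2
    have hbcase : b ∈ p1.support ∨ b ∈ p2.support := by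
      rcases List.mem_append.mp (hsupp ▸ hmemB) with h | h
      · exact Or.inl h
      · exact Or.inr (List.mem_of_mem_tail h)
    have final : ∀ (q : (Rect m 2).Walk a b), s ∉ q.support → t ∉ q.support → False := by
      intro q hqs hqt
      obtain ⟨z, hz1, hz2⟩ := StmtAux.key (c := c) q (by omega) (by show c < b.val.1; omega)
      rcases StmtAux.col_eq hst hx z hz2 with h | h
      · exact hqs (h ▸ hz1)
      · exact hqt (h ▸ hz1)
    rcases hbcase with hb1 | hb2
    · set r := p1.dropUntil b hb1 with hr
      have hp1path : p1.IsPath := hp.takeUntil hmemA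
      have hspec1 : (p1.takeUntil b hb1).append r = p1 := p1.take_spec hb1
      have hsupp1 : p1.support = (p1.takeUntil b hb1).support ++ r.support.tail := by
        conv_lhs => rw [← hspec1]
        exact Walk.support_append _ _
      have hdisj1 : (p1.takeUntil b hb1).support.Disjoint r.support.tail := by
        have := hp1path.support_nodup
        rw [hsupp1] at this
        exact (List.nodup_append'.mp this).2.2
      have hsr : s ∉ r.support := by
        intro h
        rcases List.mem_cons.mp (r.support_eq_cons ▸ h) with h | h
        · exact hbs h.symm
        · exact hdisj1 (Walk.start_mem_support _) h
      have htr : t ∉ r.support := by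
        intro h
        exact htnp1 (Walk.support_dropUntil_subset p1 hb1 h)
      refine final r.reverse ?_ ?_ <;> simp [Walk.support_reverse] <;> assumption
    · set q := p2.takeUntil b hb2 with hq
      have hp2path : p2.IsPath := hp.dropUntil hmemA
      have hspec2 : q.append (p2.dropUntil b hb2) = p2 := p2.take_spec hb2
      have hsupp2 : p2.support = q.support ++ (p2.dropUntil b hb2).support.tail := by
        conv_lhs => rw [← hspec2]
        exact Walk.support_append _ _
      have hdisj2 : q.support.Disjoint (p2.dropUntil b hb2).support.tail := by
        have := hp2path.support_nodup
        rw [hsupp2] at this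
        exact (List.nodup_append'.mp this).2.2
      have hqs : s ∉ q.support := fun h => hsnp2 (Walk.support_takeUntil_subset p2 hb2 h)
      have hqt : t ∉ q.support := by
        intro h
        have ht' : t ∈ (p2.dropUntil b hb2).support :=
          Walk.end_mem_support _
        rcases List.mem_cons.mp ((p2.dropUntil b hb2).support_eq_cons ▸ ht') with h' | h'
        · exact hbt h'.symm
        · exact hdisj2 h h'
      exact final q hqs hqt
end

section
/- Let R(m,n) be a rectangular supergrid graph with m ≥ 3 and n ≥ 2, and let s=(1,1), t=(2,1), f=(3,1). Then there exists a Hamiltonian (s,t)-path P of R(m,n) such that the edge (t,f) is on P. -/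
open SimpleGraph

section Aux

/-! ### Primitive path pieces -/

/-- Column going up: `(c,y), (c,y+1), ..., (c,y+k-1)`. -/
def colUp (c : ℤ) : ℤ → ℕ → List (ℤ × ℤ)
  | _, 0 => []
  | y, k+1 => (c, y) :: colUp c (y+1) k

/-- Bottom row going left: `(x,1), (x-1,1), ..., (x-k+1,1)`. -/
def rowLeft : ℤ → ℕ → List (ℤ × ℤ)
  | _, 0 => []
  | x, k+1 => (x, 1) :: rowLeft (x-1) k

/-- Two-column zigzag going down. -/
def zigzag (a : ℤ) : ℤ → ℕ → List (ℤ × ℤ)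
  | _, 0 => []
  | r, k+1 => (a, r) :: (a+1, r) :: zigzag a (r-1) k

/-- Boustrophedon over `k` columns starting at column `c`, rows `2 .. 1+h`. -/
def snake (h : ℕ) : ℕ → ℤ → List (ℤ × ℤ)
  | 0, _ => []
  | 1, c => colUp c 2 h
  | k+2, c => colUp c 2 h ++ ((colUp (c+1) 2 h).reverse ++ snake h k (c+2))

lemma colUp_succ (c y : ℤ) (k : ℕ) : colUp c y (k+1) = (c, y) :: colUp c (y+1) k := by
  rw [colUp]

lemma rowLeft_cons (x : ℤ) (k : ℕ) : rowLeft x (k+1) = (x, 1) :: rowLeft (x-1) k := by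
  rw [rowLeft]

lemma zigzag_succ (a r : ℤ) (k : ℕ) :
    zigzag a r (k+1) = (a, r) :: (a+1, r) :: zigzag a (r-1) k := by
  rw [zigzag]

lemma snake_zero (h : ℕ) (c : ℤ) : snake h 0 c = [] := by rw [snake]

lemma snake_one (h : ℕ) (c : ℤ) : snake h 1 c = colUp c 2 h := by rw [snake]

lemma snake_two (h k : ℕ) (c : ℤ) :
    snake h (k+2) c = colUp c 2 h ++ ((colUp (c+1) 2 h).reverse ++ snake h k (c+2)) := by
  rw [snake]

lemma head?_append_of_head? {α : Type*} {l1 l2 : List α} {u : α}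
    (h : l1.head? = some u) : (l1 ++ l2).head? = some u := by
  cases l1 <;> simp_all

/-! ### Adjacency helper -/

lemma sg_adj {x1 y1 x2 y2 : ℤ} (hne : ¬(x1 = x2 ∧ y1 = y2))
    (ha : x1 - x2 ≤ 1) (hb : x2 - x1 ≤ 1) (hc : y1 - y2 ≤ 1) (hd : y2 - y1 ≤ 1) :
    SG.Adj (x1, y1) (x2, y2) :=
  ⟨fun h => hne (by simpa [Prod.ext_iff] using h),
    abs_le.2 ⟨by omega, by omega⟩, abs_le.2 ⟨by omega, by omega⟩⟩

/-! ### Membership -/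

lemma mem_colUp {c : ℤ} {p : ℤ × ℤ} :
    ∀ {k : ℕ} {y : ℤ}, p ∈ colUp c y k ↔ p.1 = c ∧ y ≤ p.2 ∧ p.2 < y + k
  | 0, y => by simp [colUp]; try omega
  | k+1, y => by
      rw [colUp_succ]
      simp only [List.mem_cons, mem_colUp (k := k) (y := y+1), Prod.ext_iff]
      push_cast
      omega

lemma mem_rowLeft {p : ℤ × ℤ} :
    ∀ {k : ℕ} {x : ℤ}, p ∈ rowLeft x k ↔ p.2 = 1 ∧ x - k < p.1 ∧ p.1 ≤ x
  | 0, x => by simp [rowLeft]; try omega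
  | k+1, x => by
      rw [rowLeft_cons]
      simp only [List.mem_cons, mem_rowLeft (k := k) (x := x-1), Prod.ext_iff]
      push_cast
      omega

lemma mem_zigzag {a : ℤ} {p : ℤ × ℤ} :
    ∀ {k : ℕ} {r : ℤ}, p ∈ zigzag a r k ↔ (p.1 = a ∨ p.1 = a + 1) ∧ r - k < p.2 ∧ p.2 ≤ r
  | 0, r => by simp [zigzag]; try omega
  | k+1, r => by
      rw [zigzag_succ]
      simp only [List.mem_cons, mem_zigzag (k := k) (r := r-1), Prod.ext_iff]
      push_cast
      omega

lemma mem_snake {h : ℕ} {p : ℤ × ℤ} :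
    ∀ (k : ℕ) (c : ℤ), p ∈ snake h k c ↔ c ≤ p.1 ∧ p.1 < c + k ∧ 2 ≤ p.2 ∧ p.2 < 2 + h
  | 0, c => by rw [snake_zero]; simp; try omega
  | 1, c => by rw [snake_one]; rw [mem_colUp]; push_cast; omega
  | k+2, c => by
      rw [snake_two]
      simp only [List.mem_append, List.mem_reverse, mem_colUp, mem_snake k (c+2)]
      push_cast
      omega

/-! ### Nodup -/

lemma nodup_colUp {c : ℤ} : ∀ (k : ℕ) (y : ℤ), (colUp c y k).Nodup
  | 0, y => by simp [colUp]
  | k+1, y => by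
      rw [colUp_succ, List.nodup_cons]
      refine ⟨fun h => ?_, nodup_colUp k (y+1)⟩
      have h2 : y + 1 ≤ y := (mem_colUp.1 h).2.1
      omega

lemma nodup_rowLeft : ∀ (k : ℕ) (x : ℤ), (rowLeft x k).Nodup
  | 0, x => by simp [rowLeft]
  | k+1, x => by
      rw [rowLeft_cons, List.nodup_cons]
      refine ⟨fun h => ?_, nodup_rowLeft k (x-1)⟩
      have h2 : x ≤ x - 1 := (mem_rowLeft.1 h).2.2
      omega

lemma nodup_zigzag {a : ℤ} : ∀ (k : ℕ) (r : ℤ), (zigzag a r k).Nodup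
  | 0, r => by simp [zigzag]
  | k+1, r => by
      rw [zigzag_succ, List.nodup_cons, List.nodup_cons]
      refine ⟨?_, ?_, nodup_zigzag k (r-1)⟩
      · rw [List.mem_cons]
        rintro (h | h)
        · have h2 : a = a + 1 := congrArg Prod.fst h
          omega
        · have h2 : r ≤ r - 1 := (mem_zigzag.1 h).2.2
          omega
      · intro h
        have h2 : r ≤ r - 1 := (mem_zigzag.1 h).2.2
        omega

lemma nodup_snake {h : ℕ} : ∀ (k : ℕ) (c : ℤ), (snake h k c).Nodup
  | 0, c => by rw [snake_zero]; simp
  | 1, c => by rw [snake_one]; exact nodup_colUp h 2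
  | k+2, c => by
      rw [snake_two]
      refine List.Nodup.append (nodup_colUp h 2)
        (List.Nodup.append ((List.nodup_reverse).2 (nodup_colUp h 2)) (nodup_snake k (c+2)) ?_) ?_
      · intro p hp hp'
        rw [List.mem_reverse, mem_colUp] at hp; rw [mem_snake] at hp'; omega
      · intro p hp hp'
        rw [mem_colUp] at hp
        rcases List.mem_append.1 hp' with h' | h'
        · rw [List.mem_reverse, mem_colUp] at h'; omega
        · rw [mem_snake] at h'; omega

/-! ### Chains -/

lemma chain'_colUp {c : ℤ} : ∀ (k : ℕ) (y : ℤ), List.Chain' SG.Adj (colUp c y k)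
  | 0, _ => by simp [colUp, List.Chain']
  | 1, _ => by rw [colUp_succ]; simp [colUp, List.Chain']
  | k+2, y => by
      rw [colUp_succ, colUp_succ]
      refine List.isChain_cons_cons.mpr
        ⟨sg_adj (by rintro ⟨h1, h2⟩; omega) (by omega) (by omega) (by omega) (by omega), ?_⟩
      rw [← colUp_succ]
      exact chain'_colUp (k+1) (y+1)

lemma chain'_rowLeft : ∀ (k : ℕ) (x : ℤ), List.Chain' SG.Adj (rowLeft x k)
  | 0, _ => by simp [rowLeft, List.Chain']
  | 1, _ => by rw [rowLeft_cons]; simp [rowLeft, List.Chain']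
  | k+2, x => by
      rw [rowLeft_cons, rowLeft_cons]
      refine List.isChain_cons_cons.mpr
        ⟨sg_adj (by rintro ⟨h1, h2⟩; omega) (by omega) (by omega) (by omega) (by omega), ?_⟩
      rw [← rowLeft_cons]
      exact chain'_rowLeft (k+1) (x-1)

lemma chain'_zigzag {a : ℤ} : ∀ (k : ℕ) (r : ℤ), List.Chain' SG.Adj (zigzag a r k)
  | 0, _ => by simp [zigzag, List.Chain']
  | k+1, r => by
      rw [zigzag_succ]
      refine List.isChain_cons_cons.mpr
        ⟨sg_adj (by rintro ⟨h1, h2⟩; omega) (by omega) (by omega) (by omega) (by omega), ?_⟩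
      cases k with
      | zero => simp [zigzag, List.Chain']
      | succ k' =>
          rw [zigzag_succ]
          refine List.isChain_cons_cons.mpr
            ⟨sg_adj (by rintro ⟨h1, h2⟩; omega) (by omega) (by omega) (by omega) (by omega), ?_⟩
          rw [← zigzag_succ]
          exact chain'_zigzag (k'+1) (r-1)

/-! ### head? and getLast? -/

lemma head?_colUp {c y : ℤ} {k : ℕ} : (colUp c y (k+1)).head? = some (c, y) := by
  rw [colUp_succ]; rfl

lemma getLast?_colUp {c : ℤ} : ∀ (k : ℕ) (y : ℤ), (colUp c y (k+1)).getLast? = some (c, y + k)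
  | 0, y => by rw [colUp_succ, colUp]; simp
  | k+1, y => by
      rw [colUp_succ, colUp_succ, List.getLast?_cons_cons, ← colUp_succ,
        getLast?_colUp k (y+1)]
      simp only [Option.some.injEq, Prod.mk.injEq, true_and, and_true]
      push_cast
      omega

lemma head?_rowLeft {x : ℤ} {k : ℕ} : (rowLeft x (k+1)).head? = some (x, 1) := by
  rw [rowLeft_cons]; rfl

lemma getLast?_rowLeft : ∀ (k : ℕ) (x : ℤ), (rowLeft x (k+1)).getLast? = some (x - k, 1)
  | 0, x => by rw [rowLeft_cons, rowLeft]; simp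
  | k+1, x => by
      rw [rowLeft_cons, rowLeft_cons, List.getLast?_cons_cons, ← rowLeft_cons,
        getLast?_rowLeft k (x-1)]
      simp only [Option.some.injEq, Prod.mk.injEq, true_and, and_true]
      push_cast
      omega

lemma head?_zigzag {a r : ℤ} {k : ℕ} : (zigzag a r (k+1)).head? = some (a, r) := by
  rw [zigzag_succ]; rfl

lemma getLast?_zigzag {a : ℤ} : ∀ (k : ℕ) (r : ℤ), (zigzag a r (k+1)).getLast? = some (a+1, r - k)
  | 0, r => by rw [zigzag_succ, zigzag]; simp
  | k+1, r => by
      rw [zigzag_succ, List.getLast?_cons_cons, zigzag_succ, List.getLast?_cons_cons,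
        ← zigzag_succ, getLast?_zigzag k (r-1)]
      simp only [Option.some.injEq, Prod.mk.injEq, true_and, and_true]
      push_cast
      omega

lemma head?_snake {h : ℕ} (hh : 1 ≤ h) :
    ∀ (k : ℕ) (c : ℤ), 1 ≤ k → (snake h k c).head? = some (c, 2)
  | 1, c, _ => by
      obtain ⟨h', rfl⟩ : ∃ h', h = h' + 1 := ⟨h - 1, by omega⟩
      rw [snake_one]
      exact head?_colUp
  | k+2, c, _ => by
      obtain ⟨h', rfl⟩ : ∃ h', h = h' + 1 := ⟨h - 1, by omega⟩
      rw [snake_two]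
      exact head?_append_of_head? head?_colUp

lemma chain'_snake {h : ℕ} (hh : 1 ≤ h) : ∀ (k : ℕ) (c : ℤ), List.Chain' SG.Adj (snake h k c)
  | 0, c => by rw [snake_zero]; simp [List.Chain']
  | 1, c => by rw [snake_one]; exact chain'_colUp h 2
  | k+2, c => by
      obtain ⟨h', rfl⟩ : ∃ h', h = h' + 1 := ⟨h - 1, by omega⟩
      rw [snake_two]
      refine List.IsChain.append (chain'_colUp _ 2)
        (List.IsChain.append ?_ (chain'_snake hh k (c+2)) ?_) ?_
      · exact List.isChain_reverse.2 ((chain'_colUp _ 2).imp fun a b hab => hab.symm)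
      · intro x hx y hy
        rw [Option.mem_def, List.getLast?_reverse, head?_colUp, Option.some_inj] at hx
        subst hx
        rcases k with _ | k
        · rw [snake_zero] at hy; simp at hy
        · rw [Option.mem_def, head?_snake hh (k+1) (c+2) (by omega), Option.some_inj] at hy
          subst hy
          exact sg_adj (by rintro ⟨h1, h2⟩; omega) (by omega) (by omega) (by omega) (by omega)
      · intro x hx y hy
        rw [Option.mem_def, getLast?_colUp h' 2, Option.some_inj] at hx
        subst hx
        have hrev : ((colUp (c+1) 2 (h'+1)).reverse).head? = some (c+1, 2 + (h' : ℤ)) := by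
          rw [List.head?_reverse, getLast?_colUp h' 2]
        rw [Option.mem_def, head?_append_of_head? hrev, Option.some_inj] at hy
        subst hy
        exact sg_adj (by rintro ⟨h1, h2⟩; omega) (by omega) (by omega) (by omega) (by omega)

lemma snake_ne_nil {h : ℕ} (hh : 1 ≤ h) {k : ℕ} (hk : 1 ≤ k) {c : ℤ} :
    snake h k c ≠ [] := by
  intro hcon
  have : (c, (2 : ℤ)) ∈ snake h k c := by
    rw [mem_snake]
    show c ≤ c ∧ c < c + (k:ℤ) ∧ (2:ℤ) ≤ 2 ∧ (2:ℤ) < 2 + (h:ℤ)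
    omega
  rw [hcon] at this
  simp at this

lemma getLast?_snake_even {h : ℕ} (hh : 1 ≤ h) :
    ∀ (j : ℕ) (c : ℤ), 1 ≤ j → (snake h (2*j) c).getLast? = some (c + 2*j - 1, 2)
  | 1, c, _ => by
      obtain ⟨h', rfl⟩ : ∃ h', h = h' + 1 := ⟨h - 1, by omega⟩
      rw [show 2*1 = 2 from rfl, snake_two, snake_zero, List.append_nil,
        List.getLast?_append_of_ne_nil _ (by rw [colUp_succ]; simp),
        List.getLast?_reverse, head?_colUp]
      simp only [Option.some.injEq, Prod.mk.injEq, true_and, and_true]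
      omega
  | j+2, c, _ => by
      have e : 2*(j+2) = (2*(j+1)) + 2 := by omega
      rw [e, snake_two]
      have hne : snake h (2*(j+1)) (c+2) ≠ [] := snake_ne_nil hh (by omega)
      rw [List.getLast?_append_of_ne_nil _ (by simp [hne]),
        List.getLast?_append_of_ne_nil _ hne,
        getLast?_snake_even hh (j+1) (c+2) (by omega)]
      simp only [Option.some.injEq, Prod.mk.injEq, true_and, and_true]
      push_cast
      omega

lemma getLast?_snake_odd {h : ℕ} (hh : 1 ≤ h) :
    ∀ (j : ℕ) (c : ℤ), (snake h (2*j+1) c).getLast? = some (c + 2*j, (1 + h : ℤ))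
  | 0, c => by
      obtain ⟨h', rfl⟩ : ∃ h', h = h' + 1 := ⟨h - 1, by omega⟩
      rw [show 2*0+1 = 1 from rfl, snake_one, getLast?_colUp h' 2]
      simp only [Option.some.injEq, Prod.mk.injEq, true_and, and_true]
      push_cast
      omega
  | j+1, c => by
      have e : 2*(j+1)+1 = (2*j+1) + 2 := by omega
      rw [e, snake_two]
      have hne : snake h (2*j+1) (c+2) ≠ [] := snake_ne_nil hh (by omega)
      rw [List.getLast?_append_of_ne_nil _ (by simp [hne]),
        List.getLast?_append_of_ne_nil _ hne,
        getLast?_snake_odd hh j (c+2)]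
      simp only [Option.some.injEq, Prod.mk.injEq, true_and, and_true]
      push_cast
      omega

/-! ### rowLeft decomposition -/

lemma rowLeft_succ : ∀ (k : ℕ) (x : ℤ), rowLeft x (k+1) = rowLeft x k ++ [(x - k, 1)]
  | 0, x => by rw [rowLeft_cons, rowLeft, rowLeft]; simp
  | k+1, x => by
      rw [rowLeft_cons, rowLeft_succ k (x-1), rowLeft_cons, List.cons_append,
        show (x - 1 - (k:ℤ)) = x - (((k+1):ℕ):ℤ) from by push_cast; ring]

/-! ### List-to-walk machinery -/

lemma walk_of_list {V : Type*} {G : SimpleGraph V} (L : List V) :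
    ∀ (u v : V), L.Chain' G.Adj → L.head? = some u → L.getLast? = some v →
      ∃ w : G.Walk u v, w.support = L ∧
        w.edges = L.zipWith (fun a b => Sym2.mk a b) L.tail := by
  induction L with
  | nil => intro u v _ hh _; simp at hh
  | cons a L ih =>
      intro u v hc hh hl
      obtain rfl : a = u := by simpa using hh
      cases L with
      | nil =>
          obtain rfl : a = v := by simpa using hl
          exact ⟨SimpleGraph.Walk.nil, by simp, by simp⟩
      | cons b L' =>
          obtain ⟨hadj, hc'⟩ := List.isChain_cons_cons.mp hc
          obtain ⟨w, hw1, hw2⟩ := ih b v hc' rfl (by rwa [List.getLast?_cons_cons] at hl)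
          exact ⟨SimpleGraph.Walk.cons hadj w, by simp [hw1], by simp [hw2]⟩

lemma mem_zip_last {V : Type*} (x y : V) :
    ∀ (l : List V), Sym2.mk x y ∈
      List.zipWith (fun a b => Sym2.mk a b) (l ++ [x, y]) ((l ++ [x, y]).tail)
  | [] => by simp
  | [a] => by simp
  | a :: b :: l => by
      have ih := mem_zip_last x y (b :: l)
      simp only [List.cons_append, List.zipWith_cons_cons, List.tail_cons] at ih ⊢
      exact List.mem_cons_of_mem _ ih

lemma zipWith_tail_map {α β : Type*} (g : α → β) :
    ∀ (l : List α),
      (List.zipWith (fun a b => Sym2.mk a b) l l.tail).map (Sym2.map g)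
        = List.zipWith (fun a b => Sym2.mk a b) (l.map g) (l.map g).tail
  | [] => rfl
  | [a] => rfl
  | a :: b :: l => by
      have ih := zipWith_tail_map g (b :: l)
      simp only [List.map_cons, List.zipWith_cons_cons, List.tail_cons] at ih ⊢
      rw [ih]
      simp [Sym2.map_pair_eq]

end Aux

section Main

lemma main_list (m n : ℤ) (hm : 3 ≤ m) (hn : 2 ≤ n) :
    ∃ L P : List (ℤ × ℤ), L = P ++ [((3:ℤ), (1:ℤ)), ((2:ℤ), (1:ℤ))] ∧
      L.Chain' SG.Adj ∧ L.Nodup ∧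
      L.head? = some ((1:ℤ), (1:ℤ)) ∧ L.getLast? = some ((2:ℤ), (1:ℤ)) ∧
      ∀ p, p ∈ L ↔ p ∈ RectSet m n := by
  set h : ℕ := (n-1).toNat with hhdef
  have hh1 : 1 ≤ h := by omega
  have hhn : (h : ℤ) = n - 1 := by omega
  set k3 : ℕ := (m-3).toNat with hk3
  have hk3' : (k3 : ℤ) = m - 3 := by omega
  have hrow_eq : rowLeft m (m-1).toNat = rowLeft m k3 ++ [((3:ℤ), (1:ℤ)), ((2:ℤ), (1:ℤ))] := by
    have e1 : (m-1).toNat = (k3 + 1) + 1 := by omega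
    rw [e1, rowLeft_succ (k3+1) m, rowLeft_succ k3 m, List.append_assoc]
    congr 1
    rw [show m - ((k3:ℤ)) = 3 from by omega, show m - (((k3:ℕ)+1 : ℕ) : ℤ) = 2 from by push_cast; omega]
    rfl
  have hrow_ne : rowLeft m (m-1).toNat ≠ [] := by
    have e1 : (m-1).toNat = (m-2).toNat + 1 := by omega
    rw [e1]; exact List.cons_ne_nil _ _
  have hrow_head : (rowLeft m (m-1).toNat).head? = some (m, (1:ℤ)) := by
    have e1 : (m-1).toNat = (m-2).toNat + 1 := by omega
    rw [e1]; exact head?_rowLeft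
  have hrow_last : (rowLeft m (m-1).toNat).getLast? = some ((2:ℤ), (1:ℤ)) := by
    have e1 : (m-1).toNat = (m-2).toNat + 1 := by omega
    rw [e1, getLast?_rowLeft]
    simp only [Option.some.injEq, Prod.mk.injEq, true_and, and_true]
    omega
  rcases Int.even_or_odd m with ⟨a, ha⟩ | ⟨a, ha⟩
  · -- even case
    set j : ℕ := a.toNat with hj
    have hja : (j : ℤ) = a := by omega
    have h2j : ((2*j : ℕ) : ℤ) = m := by push_cast; omega
    set body := snake h (2*j) 1 with hbody
    have hbody_head : body.head? = some ((1:ℤ), (2:ℤ)) :=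
      head?_snake hh1 (2*j) 1 (by omega)
    have hbody_last : body.getLast? = some (m, (2:ℤ)) := by
      rw [hbody, getLast?_snake_even hh1 j 1 (by omega)]
      simp only [Option.some.injEq, Prod.mk.injEq, true_and, and_true]
      omega
    refine ⟨((1:ℤ), (1:ℤ)) :: (body ++ rowLeft m (m-1).toNat),
      ((1:ℤ), (1:ℤ)) :: (body ++ rowLeft m k3), ?_, ?_, ?_, rfl, ?_, ?_⟩
    · rw [hrow_eq]; simp [List.append_assoc]
    · refine List.isChain_cons.2 ⟨?_, ?_⟩
      · intro y hy
        rw [head?_append_of_head? hbody_head, Option.mem_def, Option.some_inj] at hy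
        subst hy
        exact sg_adj (by rintro ⟨h1, h2⟩; omega) (by omega) (by omega) (by omega) (by omega)
      · refine List.IsChain.append (chain'_snake hh1 _ _) (chain'_rowLeft _ _) ?_
        intro x hx y hy
        rw [Option.mem_def, hbody_last, Option.some_inj] at hx
        rw [Option.mem_def, hrow_head, Option.some_inj] at hy
        subst hx; subst hy
        exact sg_adj (by rintro ⟨h1, h2⟩; omega) (by omega) (by omega) (by omega) (by omega)
    · refine List.nodup_cons.2 ⟨?_, ?_⟩
      · intro hmem
        rcases List.mem_append.1 hmem with h' | h'
        · rw [hbody, mem_snake] at h'; omega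
        · rw [mem_rowLeft] at h'; omega
      · refine List.Nodup.append (nodup_snake _ _) (nodup_rowLeft _ _) ?_
        intro p hp hp'
        rw [hbody, mem_snake] at hp; rw [mem_rowLeft] at hp'; omega
    · rw [← List.cons_append, List.getLast?_append_of_ne_nil _ hrow_ne]
      exact hrow_last
    · intro p
      simp only [List.mem_cons, List.mem_append, hbody, mem_snake, mem_rowLeft,
        RectSet, Set.mem_setOf_eq, Prod.ext_iff]
      omega
  · -- odd case
    set j : ℕ := (a-1).toNat with hj
    have hja : (j : ℤ) = a - 1 := by omega
    have h2j : ((2*j+1 : ℕ) : ℤ) = m - 2 := by push_cast; omega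
    set body := snake h (2*j+1) 1 with hbody
    set zig := zigzag (m-1) n h with hzig
    have hbody_head : body.head? = some ((1:ℤ), (2:ℤ)) :=
      head?_snake hh1 (2*j+1) 1 (by omega)
    have hbody_last : body.getLast? = some (m-2, (n : ℤ)) := by
      rw [hbody, getLast?_snake_odd hh1 j 1]
      simp only [Option.some.injEq, Prod.mk.injEq, true_and, and_true]
      omega
    have hzig_head : zig.head? = some (m-1, n) := by
      have e1 : h = (h-1) + 1 := by omega
      rw [hzig, e1]; exact head?_zigzag
    have hzig_last : zig.getLast? = some (m, (2:ℤ)) := by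
      have e1 : h = (h-1) + 1 := by omega
      rw [hzig, e1, getLast?_zigzag]
      simp only [Option.some.injEq, Prod.mk.injEq, true_and, and_true]
      omega
    have hzig_ne : zig ≠ [] := by
      have e1 : h = (h-1) + 1 := by omega
      rw [hzig, e1]; exact List.cons_ne_nil _ _
    refine ⟨((1:ℤ), (1:ℤ)) :: (body ++ (zig ++ rowLeft m (m-1).toNat)),
      ((1:ℤ), (1:ℤ)) :: (body ++ (zig ++ rowLeft m k3)), ?_, ?_, ?_, rfl, ?_, ?_⟩
    · rw [hrow_eq]; simp [List.append_assoc]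
    · refine List.isChain_cons.2 ⟨?_, ?_⟩
      · intro y hy
        rw [head?_append_of_head? hbody_head, Option.mem_def, Option.some_inj] at hy
        subst hy
        exact sg_adj (by rintro ⟨h1, h2⟩; omega) (by omega) (by omega) (by omega) (by omega)
      · refine List.IsChain.append (chain'_snake hh1 _ _) ?_ ?_
        · refine List.IsChain.append (chain'_zigzag _ _) (chain'_rowLeft _ _) ?_
          intro x hx y hy
          rw [Option.mem_def, hzig_last, Option.some_inj] at hx
          rw [Option.mem_def, hrow_head, Option.some_inj] at hy
          subst hx; subst hy
          exact sg_adj (by rintro ⟨h1, h2⟩; omega) (by omega) (by omega) (by omega) (by omega)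
        · intro x hx y hy
          rw [Option.mem_def, hbody_last, Option.some_inj] at hx
          rw [Option.mem_def, head?_append_of_head? hzig_head, Option.some_inj] at hy
          subst hx; subst hy
          exact sg_adj (by rintro ⟨h1, h2⟩; omega) (by omega) (by omega) (by omega) (by omega)
    · refine List.nodup_cons.2 ⟨?_, ?_⟩
      · intro hmem
        rcases List.mem_append.1 hmem with h' | h'
        · rw [hbody, mem_snake] at h'; omega
        · rcases List.mem_append.1 h' with h'' | h''
          · rw [hzig, mem_zigzag] at h''; omega
          · rw [mem_rowLeft] at h''; omega
      · refine List.Nodup.append (nodup_snake _ _) ?_ ?_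
        · refine List.Nodup.append (nodup_zigzag _ _) (nodup_rowLeft _ _) ?_
          intro p hp hp'
          rw [hzig, mem_zigzag] at hp; rw [mem_rowLeft] at hp'; omega
        · intro p hp hp'
          rw [hbody, mem_snake] at hp
          rcases List.mem_append.1 hp' with h' | h'
          · rw [hzig, mem_zigzag] at h'; omega
          · rw [mem_rowLeft] at h'; omega
    · rw [← List.cons_append,
        List.getLast?_append_of_ne_nil _ (fun hcon => hrow_ne (List.append_eq_nil_iff.mp hcon).2),
        List.getLast?_append_of_ne_nil _ hrow_ne]
      exact hrow_last
    · intro p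
      simp only [List.mem_cons, List.mem_append, hbody, mem_snake, hzig, mem_zigzag,
        mem_rowLeft, RectSet, Set.mem_setOf_eq, Prod.ext_iff]
      omega

end Main

/-- For m ≥ 3 and n ≥ 2, with s=(1,1), t=(2,1), f=(3,1), there exists a
Hamiltonian (s,t)-path of R(m,n) containing the edge (t,f). -/
theorem stmt_6 (m n : ℤ) (hm : 3 ≤ m) (hn : 2 ≤ n)
    (s t f : RectSet m n)
    (hs : s.val = ((1 : ℤ), (1 : ℤ))) (ht : t.val = ((2 : ℤ), (1 : ℤ)))
    (hf : f.val = ((3 : ℤ), (1 : ℤ))) :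
    ∃ w : (Rect m n).Walk s t, w.IsPath ∧ w.IsHamiltonian ∧
      Sym2.mk t f ∈ w.edges := by
  obtain ⟨L, P, hLP, hchain, hnodup, hhead, hlast, hmem⟩ := main_list m n hm hn
  have hsub : ∀ p ∈ L, p ∈ RectSet m n := fun p hp => (hmem p).1 hp
  set Ls : List (RectSet m n) := L.attachWith (· ∈ RectSet m n) hsub with hLs
  have hmapval : Ls.map Subtype.val = L := List.attachWith_map_subtype_val hsub
  -- chain in the induced graph
  have hchainLs : Ls.Chain' (Rect m n).Adj := by
    have h1 : (Ls.map Subtype.val).Chain' SG.Adj := by rw [hmapval]; exact hchain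
    unfold List.Chain' at h1
    rw [List.isChain_map] at h1
    exact h1
  -- nodup
  have hnodupLs : Ls.Nodup := by
    refine List.Nodup.of_map Subtype.val ?_
    rw [hmapval]; exact hnodup
  -- coverage
  have hmemLs : ∀ v : RectSet m n, v ∈ Ls := by
    intro v
    have h1 : v.val ∈ Ls.map Subtype.val := by rw [hmapval]; exact (hmem v.val).2 v.2
    exact (List.mem_map_of_injective Subtype.val_injective).1 h1
  -- head and last
  have hheadLs : Ls.head? = some s := by
    have h1 : Ls.head?.map Subtype.val = some (((1:ℤ), (1:ℤ)) : ℤ × ℤ) := by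
      rw [← List.head?_map, hmapval]; exact hhead
    cases hq : Ls.head? with
    | none => rw [hq] at h1; simp at h1
    | some u =>
        rw [hq] at h1
        simp only [Option.map_some, Option.some_inj] at h1
        exact congrArg some (Subtype.ext (by rw [h1, hs]))
  have hlastLs : Ls.getLast? = some t := by
    have h1 : Ls.getLast?.map Subtype.val = some (((2:ℤ), (1:ℤ)) : ℤ × ℤ) := by
      rw [← List.getLast?_map, hmapval]; exact hlast
    cases hq : Ls.getLast? with
    | none => rw [hq] at h1; simp at h1
    | some u =>
        rw [hq] at h1
        simp only [Option.map_some, Option.some_inj] at h1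
        exact congrArg some (Subtype.ext (by rw [h1, ht]))
  obtain ⟨w, hws, hwe⟩ := walk_of_list Ls s t hchainLs hheadLs hlastLs
  refine ⟨w, ?_, ?_, ?_⟩
  · rw [SimpleGraph.Walk.isPath_def, hws]; exact hnodupLs
  · intro v
    rw [hws]
    exact @List.count_eq_one_of_mem _ instBEqOfDecidableEq _ _ _ hnodupLs (hmemLs v)
  · -- the edge (t,f)
    have hinj : Function.Injective (Sym2.map (Subtype.val : RectSet m n → ℤ × ℤ)) :=
      Sym2.map.injective Subtype.val_injective
    have hmapedges : w.edges.map (Sym2.map Subtype.val)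
        = List.zipWith (fun a b => Sym2.mk a b) L L.tail := by
      rw [hwe, ← hmapval]
      exact zipWith_tail_map Subtype.val Ls
    have hedge' : Sym2.map Subtype.val (Sym2.mk t f) ∈ w.edges.map (Sym2.map Subtype.val) := by
      rw [hmapedges, Sym2.map_pair_eq, ht, hf, Sym2.eq_swap, hLP]
      exact mem_zip_last _ _ P
    exact (List.mem_map_of_injective hinj).1 hedge'
end

section
/- Let L(m,n;k,l) be the L-shaped supergrid graph with m−k = 1, n−l = 2, l = 1, and k ≥ 2, and let {s,t} = {(1,2),(2,3)} or {s,t} = {(1,3),(2,2)}. Then L(m,n;k,l) has no Hamiltonian (s,t)-path; moreover, every (s,t)-path in L(m,n;k,l) has length at most mn − kl − 1 (one less than the total number of vertices). -/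
open SimpleGraph

/-- unique split of a nodup list at an element -/
lemma nodup_split_unique {α : Type*} {x : α} :
    ∀ {A B C D : List α}, (A ++ x :: B).Nodup → A ++ x :: B = C ++ x :: D →
      A = C ∧ B = D := by
  intro A
  induction A with
  | nil =>
    intro B C D hnd h
    cases C with
    | nil => simp_all
    | cons c C' =>
      exfalso
      simp only [List.nil_append, List.cons_append, List.cons.injEq] at h
      obtain ⟨rfl, rfl⟩ := h
      simp at hnd
  | cons a A' ih =>
    intro B C D hnd h
    cases C with
    | nil =>
      exfalso
      simp only [List.nil_append, List.cons_append, List.cons.injEq] at h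
      obtain ⟨rfl, rfl⟩ := h
      simp at hnd
    | cons c C' =>
      simp only [List.cons_append, List.cons.injEq] at h
      obtain ⟨rfl, h2⟩ := h
      obtain ⟨h3, h4⟩ := ih (by simpa using hnd.of_cons) h2
      exact ⟨by rw [h3], h4⟩

lemma last_unique {α : Type*} {L C D : List α} {tv : α}
    (hnd : L.Nodup) (hlast : L.getLast? = some tv) (h : L = C ++ tv :: D) : D = [] := by
  have hne : L ≠ [] := by rintro rfl; simp at hlast
  have h2 : L = L.dropLast ++ tv :: [] := by
    have := List.dropLast_append_getLast? tv (by simpa using hlast)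
    simpa using this.symm
  have := nodup_split_unique (x := tv) (h ▸ hnd) (h.symm.trans h2)
  exact this.2

lemma head_unique {α : Type*} {L C D : List α} {sv : α}
    (hnd : L.Nodup) (hhead : L.head? = some sv) (h : L = C ++ sv :: D) : C = [] := by
  have h2 : L = [] ++ sv :: L.tail := by
    cases L with
    | nil => simp at hhead
    | cons a T => simp at hhead; simp [hhead]
  have := nodup_split_unique (x := sv) (h ▸ hnd) (h.symm.trans h2)
  exact this.1

/-- an internal vertex of a chain has two neighbours in the list -/
lemma internal_decomp {α : Type*} {R : α → α → Prop} {L : List α} {v sv tv : α}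
    (hchain : L.Chain' R) (hhead : L.head? = some sv) (hlast : L.getLast? = some tv)
    (hv : v ∈ L) (hvs : v ≠ sv) (hvt : v ≠ tv) :
    ∃ A a b B, L = A ++ a :: v :: b :: B ∧ R a v ∧ R v b := by
  obtain ⟨P, Q, rfl⟩ := List.append_of_mem hv
  rcases P.eq_nil_or_concat with rfl | ⟨A, a, rfl⟩
  · exfalso; simp at hhead; exact hvs hhead
  rcases Q with _ | ⟨b, Q'⟩
  · exfalso
    rw [List.getLast?_concat] at hlast
    · exact hvt (by simpa using hlast)
  · have h := List.isChain_append_cons_cons.mp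
      (show List.Chain' R ((A ++ [a]) ++ v :: b :: Q') by simpa using hchain)
    have h1 : List.Chain' R (A ++ a :: v :: ([] : List α)) := by simpa [List.Chain'] using h.1
    exact ⟨A, a, b, Q', by simp, (List.isChain_append_cons_cons.mp h1).2.1, h.2.1⟩

lemma split_agree {α : Type*} {L A B C D : List α} {x : α} (hnd : L.Nodup)
    (h1 : L = A ++ x :: B) (h2 : L = C ++ x :: D) : A = C ∧ B = D :=
  nodup_split_unique (h1 ▸ hnd) (h1.symm.trans h2)

lemma head?_decomp {α : Type*} {L : List α} {a : α} (h : L.head? = some a) :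
    ∃ T, L = a :: T := by
  cases L with
  | nil => simp at h
  | cons x T => simp at h; exact ⟨T, by rw [h]⟩

lemma listcore (L : List (ℤ × ℤ))
    (hmem : ∀ p ∈ L, 1 ≤ p.1 ∧ 1 ≤ p.2 ∧ p.2 ≤ 3 ∧ ¬(2 ≤ p.1 ∧ p.2 ≤ 1))
    (hchain : L.Chain' SG.Adj) (hnd : L.Nodup)
    (hcase : (L.head? = some (1,2) ∧ L.getLast? = some (2,3)) ∨
             (L.head? = some (1,3) ∧ L.getLast? = some (2,2)))
    (h11 : ((1:ℤ),(1:ℤ)) ∈ L) (h13 : ((1:ℤ),(3:ℤ)) ∈ L)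
    (h32 : ((3:ℤ),(2:ℤ)) ∈ L) : False := by
  have nbr11 : ∀ p ∈ L, SG.Adj p (1,1) → p = (1,2) ∨ p = (2,2) := by
    rintro ⟨x, y⟩ hp hadj
    obtain ⟨hm1, hm2, hm3, hm4⟩ := hmem _ hp
    obtain ⟨hne, ha1, ha2⟩ := hadj
    rw [abs_le] at ha1 ha2
    dsimp only at hm1 hm2 hm3 hm4 ha1 ha2
    have hne' : ¬(x = 1 ∧ y = 1) := by
      rintro ⟨rfl, rfl⟩; exact hne rfl
    simp only [Prod.mk.injEq]
    omega
  have nbr13 : ∀ p ∈ L, SG.Adj p (1,3) → p = (1,2) ∨ p = (2,2) ∨ p = (2,3) := by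
    rintro ⟨x, y⟩ hp hadj
    obtain ⟨hm1, hm2, hm3, hm4⟩ := hmem _ hp
    obtain ⟨hne, ha1, ha2⟩ := hadj
    rw [abs_le] at ha1 ha2
    dsimp only at hm1 hm2 hm3 hm4 ha1 ha2
    have hne' : ¬(x = 1 ∧ y = 3) := by
      rintro ⟨rfl, rfl⟩; exact hne rfl
    simp only [Prod.mk.injEq]
    omega
  have nbr12 : ∀ p ∈ L, SG.Adj p (1,2) →
      p = (1,1) ∨ p = (1,3) ∨ p = (2,2) ∨ p = (2,3) := by
    rintro ⟨x, y⟩ hp hadj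
    obtain ⟨hm1, hm2, hm3, hm4⟩ := hmem _ hp
    obtain ⟨hne, ha1, ha2⟩ := hadj
    rw [abs_le] at ha1 ha2
    dsimp only at hm1 hm2 hm3 hm4 ha1 ha2
    have hne' : ¬(x = 1 ∧ y = 2) := by
      rintro ⟨rfl, rfl⟩; exact hne rfl
    simp only [Prod.mk.injEq]
    omega
  rcases hcase with ⟨hh, hlast⟩ | ⟨hh, hlast⟩
  · -- s = (1,2), t = (2,3)
    obtain ⟨T, hT⟩ := head?_decomp hh
    obtain ⟨A, a, b, B, hL1, ha1, ha2⟩ :=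
      internal_decomp hchain hh hlast h11 (by decide) (by decide)
    have haL : a ∈ L := by rw [hL1]; simp
    have hbL : b ∈ L := by rw [hL1]; simp
    rcases nbr11 a haL ha1 with rfl | rfl
    · -- a = (1,2)
      obtain ⟨hA, hTB⟩ := split_agree hnd hL1
        (show L = [] ++ ((1:ℤ),(2:ℤ)) :: T by simpa using hT)
      subst hA
      rcases nbr11 b hbL ha2.symm with rfl | rfl
      · -- b = (1,2) : duplicate
        obtain ⟨h1, _⟩ := split_agree hnd
          (show L = [((1:ℤ),(2:ℤ)), (1,1)] ++ ((1:ℤ),(2:ℤ)) :: B by rw [hL1]; try simp)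
          (show L = [] ++ ((1:ℤ),(2:ℤ)) :: T by simpa using hT)
        simp at h1
      · -- b = (2,2)
        obtain ⟨C, c, d, D, hL2, hc1, hc2⟩ :=
          internal_decomp hchain hh hlast h13 (by decide) (by decide)
        have hcL : c ∈ L := by rw [hL2]; simp
        have hdL : d ∈ L := by rw [hL2]; simp
        rcases nbr13 c hcL hc1 with rfl | rfl | rfl
        · -- c = (1,2)
          obtain ⟨_, h2⟩ := split_agree hnd hL2
            (show L = [] ++ ((1:ℤ),(2:ℤ)) :: ((1,1) :: (2,2) :: B) by simpa using hL1)
          simp at h2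
        · -- c = (2,2)
          obtain ⟨hC, hB⟩ := split_agree hnd
            (show L = [((1:ℤ),(2:ℤ)), (1,1)] ++ ((2:ℤ),(2:ℤ)) :: B by rw [hL1]; try simp)
            hL2
          rcases nbr13 d hdL hc2.symm with rfl | rfl | rfl
          · -- d = (1,2) : duplicate
            obtain ⟨h1, _⟩ := split_agree hnd
              (show L = (C ++ [((2:ℤ),(2:ℤ)), ((1:ℤ),(3:ℤ))]) ++ ((1:ℤ),(2:ℤ)) :: D by
                rw [hL2]; try simp)
              (show L = [] ++ ((1:ℤ),(2:ℤ)) :: T by simpa using hT)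
            simp at h1
          · -- d = (2,2) : duplicate
            obtain ⟨h1, _⟩ := split_agree hnd
              (show L = (C ++ [((2:ℤ),(2:ℤ)), ((1:ℤ),(3:ℤ))]) ++ ((2:ℤ),(2:ℤ)) :: D by
                rw [hL2]; try simp)
              hL2
            have := congrArg List.length h1
            simp at this
          · -- d = (2,3) : end of path
            have hD : D = [] := last_unique hnd hlast
              (show L = (C ++ [((2:ℤ),(2:ℤ)), ((1:ℤ),(3:ℤ))]) ++ ((2:ℤ),(3:ℤ)) :: D by
                rw [hL2]; try simp)
            subst hD
            rw [← hC] at hL2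
            rw [hL2] at h32
            simp [Prod.ext_iff] at h32
        · -- c = (2,3) : t not at end
          have := last_unique hnd hlast hL2
          simp at this
    · -- a = (2,2)
      rcases nbr11 b hbL ha2.symm with rfl | rfl
      · -- b = (1,2)
        obtain ⟨h1, _⟩ := split_agree hnd
          (show L = (A ++ [((2:ℤ),(2:ℤ)), ((1:ℤ),(1:ℤ))]) ++ ((1:ℤ),(2:ℤ)) :: B by
            rw [hL1]; try simp)
          (show L = [] ++ ((1:ℤ),(2:ℤ)) :: T by simpa using hT)
        simp at h1
      · -- b = (2,2) : duplicate with a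
        obtain ⟨h1, _⟩ := split_agree hnd hL1
          (show L = (A ++ [((2:ℤ),(2:ℤ)), ((1:ℤ),(1:ℤ))]) ++ ((2:ℤ),(2:ℤ)) :: B by
            rw [hL1]; try simp)
        have := congrArg List.length h1
        simp at this
  · -- s = (1,3), t = (2,2)
    obtain ⟨T, hT⟩ := head?_decomp hh
    obtain ⟨A, a, b, B, hL1, ha1, ha2⟩ :=
      internal_decomp hchain hh hlast h11 (by decide) (by decide)
    have haL : a ∈ L := by rw [hL1]; simp
    have hbL : b ∈ L := by rw [hL1]; simp
    rcases nbr11 a haL ha1 with rfl | rfl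
    · -- a = (1,2)
      rcases nbr11 b hbL ha2.symm with rfl | rfl
      · -- b = (1,2) : duplicate
        obtain ⟨h1, _⟩ := split_agree hnd hL1
          (show L = (A ++ [((1:ℤ),(2:ℤ)), ((1:ℤ),(1:ℤ))]) ++ ((1:ℤ),(2:ℤ)) :: B by
            rw [hL1]; try simp)
        have := congrArg List.length h1
        simp at this
      · -- b = (2,2) = t, so B = []
        have hB : B = [] := last_unique hnd hlast
          (show L = (A ++ [((1:ℤ),(2:ℤ)), ((1:ℤ),(1:ℤ))]) ++ ((2:ℤ),(2:ℤ)) :: B by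
            rw [hL1]; try simp)
        subst hB
        -- L = A ++ [(1,2),(1,1),(2,2)]
        obtain ⟨C, c, d, D, hL2, hc1, hc2⟩ :=
          internal_decomp hchain hh hlast (show ((1:ℤ),(2:ℤ)) ∈ L by rw [hL1]; try simp)
            (by decide) (by decide)
        have hcL : c ∈ L := by rw [hL2]; simp
        obtain ⟨hCA, hdD⟩ := split_agree hnd
          (show L = (C ++ [c]) ++ ((1:ℤ),(2:ℤ)) :: (d :: D) by rw [hL2]; try simp)
          (show L = A ++ ((1:ℤ),(2:ℤ)) :: [(1,1), (2,2)] by rw [hL1]; try simp)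
        have hd : d = (1,1) := by simpa using congrArg List.head? hdD
        have hD2 : D = [((2:ℤ),(2:ℤ))] := by
          simpa using congrArg List.tail hdD
        subst hd
        subst hD2
        rcases nbr12 c hcL hc1 with rfl | rfl | rfl | rfl
        · -- c = (1,1) : duplicate
          obtain ⟨h1, _⟩ := split_agree hnd hL2
            (show L = (C ++ [((1:ℤ),(1:ℤ)), ((1:ℤ),(2:ℤ))]) ++ ((1:ℤ),(1:ℤ)) :: [(2,2)] by
              rw [hL2]; try simp)
          have := congrArg List.length h1
          simp at this
        · -- c = (1,3) = s, so C = []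
          have hC : C = [] := head_unique hnd hh hL2
          subst hC
          rw [hL2] at h32
          simp [Prod.ext_iff] at h32
        · -- c = (2,2) : duplicate
          obtain ⟨h1, _⟩ := split_agree hnd hL2
            (show L = (C ++ [((2:ℤ),(2:ℤ)), ((1:ℤ),(2:ℤ)), ((1:ℤ),(1:ℤ))]) ++ ((2:ℤ),(2:ℤ)) :: [] by
              rw [hL2]; try simp)
          have := congrArg List.length h1
          simp at this
        · -- c = (2,3)
          cases T with
          | nil =>
            rw [hT] at h11; simp [Prod.ext_iff] at h11
          | cons e T' =>
            have hadj : SG.Adj (1,3) e := (List.isChain_cons_cons.mp (hT ▸ hchain)).1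
            have heL : e ∈ L := by rw [hT]; simp
            rcases nbr13 e heL hadj.symm with rfl | rfl | rfl
            · -- e = (1,2)
              obtain ⟨h1, _⟩ := split_agree hnd
                (show L = [((1:ℤ),(3:ℤ))] ++ ((1:ℤ),(2:ℤ)) :: T' by rw [hT]; try simp)
                (show L = (C ++ [((2:ℤ),(3:ℤ))]) ++ ((1:ℤ),(2:ℤ)) :: [(1,1),(2,2)] by
                  rw [hL2]; try simp)
              have := congrArg List.getLast? h1
              simp [List.getLast?_concat] at this
            · -- e = (2,2)
              obtain ⟨h1, _⟩ := split_agree hnd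
                (show L = [((1:ℤ),(3:ℤ))] ++ ((2:ℤ),(2:ℤ)) :: T' by rw [hT]; try simp)
                (show L = (C ++ [((2:ℤ),(3:ℤ)), ((1:ℤ),(2:ℤ)), ((1:ℤ),(1:ℤ))]) ++ ((2:ℤ),(2:ℤ)) :: [] by
                  rw [hL2]; try simp)
              have := congrArg List.length h1
              simp at this
            · -- e = (2,3)
              obtain ⟨h1, h2⟩ := split_agree hnd
                (show L = [((1:ℤ),(3:ℤ))] ++ ((2:ℤ),(3:ℤ)) :: T' by rw [hT]; try simp)
                (show L = C ++ ((2:ℤ),(3:ℤ)) :: [(1,2),(1,1),(2,2)] by rw [hL2]; try simp)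
              rw [hT, h2] at h32
              simp [Prod.ext_iff] at h32
    · -- a = (2,2) = t, but has successors
      have := last_unique hnd hlast hL1
      simp at this

/-- For L(m,n;k,l) with m-k = 1, n-l = 2, l = 1, k ≥ 2, and
{s,t} = {(1,2),(2,3)} or {(1,3),(2,2)}, there is no Hamiltonian (s,t)-path,
and every (s,t)-path has length (number of vertices) at most mn - kl - 1. -/
theorem stmt_14 (m n k l : ℤ) (hmk : m - k = 1) (hnl : n - l = 2) (hl : l = 1)
    (hk : 2 ≤ k) (s t : LSet m n k l)
    (hst : ({s.val, t.val} : Set (ℤ × ℤ)) = {((1 : ℤ), (2 : ℤ)), ((2 : ℤ), (3 : ℤ))} ∨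
           ({s.val, t.val} : Set (ℤ × ℤ)) = {((1 : ℤ), (3 : ℤ)), ((2 : ℤ), (2 : ℤ))}) :
    (∀ w : (LG m n k l).Walk s t, ¬ (w.IsPath ∧ w.IsHamiltonian)) ∧
      ∀ w : (LG m n k l).Walk s t, w.IsPath →
        (w.support.length : ℤ) ≤ m * n - k * l - 1 := by
  subst hl
  obtain rfl : n = 3 := by omega
  have hm3 : 3 ≤ m := by omega
  have memPt : ∀ x y : ℤ, 1 ≤ x → x ≤ m → 1 ≤ y → y ≤ 3 → ¬(2 ≤ x ∧ y ≤ 1) →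
      ((x, y) : ℤ × ℤ) ∈ LSet m 3 k 1 := by
    intro x y h1 h2 h3 h4 h5
    simp only [LSet, Set.mem_setOf_eq]
    omega
  have key : ∀ w : (LG m 3 k 1).Walk s t, w.IsPath →
      (∀ v : LSet m 3 k 1, v ∈ w.support) → False := by
    intro w hw hall
    have hchain : (w.support.map Subtype.val).Chain' SG.Adj := by
      rw [List.Chain', List.isChain_map]
      exact w.isChain_adj_support
    have hnd : (w.support.map Subtype.val).Nodup :=
      hw.support_nodup.map Subtype.val_injective
    have hhead : (w.support.map Subtype.val).head? = some s.val := by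
      rw [w.support_eq_cons]; rfl
    have hlast : (w.support.map Subtype.val).getLast? = some t.val := by
      rw [← List.head?_reverse, ← List.map_reverse, ← SimpleGraph.Walk.support_reverse,
        w.reverse.support_eq_cons]
      rfl
    have hmemgen : ∀ p ∈ w.support.map Subtype.val,
        1 ≤ p.1 ∧ 1 ≤ p.2 ∧ p.2 ≤ 3 ∧ ¬(2 ≤ p.1 ∧ p.2 ≤ 1) := by
      intro p hp
      obtain ⟨v, hv, rfl⟩ := List.mem_map.mp hp
      obtain ⟨⟨a1, a2, a3, a4⟩, hnot⟩ := v.2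
      exact ⟨a1, a3, a4, fun h => hnot ⟨by omega, h.2⟩⟩
    have hpt : ∀ x y : ℤ, ((x, y) : ℤ × ℤ) ∈ LSet m 3 k 1 →
        ((x, y) : ℤ × ℤ) ∈ w.support.map Subtype.val := by
      intro x y hmem
      exact List.mem_map.mpr ⟨⟨(x, y), hmem⟩, hall _, rfl⟩
    have h11 := hpt 1 1 (memPt 1 1 (by omega) (by omega) (by omega) (by omega) (by omega))
    have h13 := hpt 1 3 (memPt 1 3 (by omega) (by omega) (by omega) (by omega) (by omega))
    have h32 := hpt 3 2 (memPt 3 2 (by omega) (by omega) (by omega) (by omega) (by omega))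
    have hchainR : ((w.support.map Subtype.val).reverse).Chain' SG.Adj :=
      List.isChain_reverse.mpr (hchain.imp fun a b h => h.symm)
    have hmemgenR : ∀ p ∈ (w.support.map Subtype.val).reverse,
        1 ≤ p.1 ∧ 1 ≤ p.2 ∧ p.2 ≤ 3 ∧ ¬(2 ≤ p.1 ∧ p.2 ≤ 1) :=
      fun p hp => hmemgen p (List.mem_reverse.mp hp)
    rcases hst with hst | hst <;>
      rcases Set.pair_eq_pair_iff.mp hst with ⟨hs, ht⟩ | ⟨hs, ht⟩
    · exact listcore _ hmemgen hchain hnd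
        (Or.inl ⟨by rw [hhead, hs], by rw [hlast, ht]⟩) h11 h13 h32
    · exact listcore _ hmemgenR hchainR (List.nodup_reverse.mpr hnd)
        (Or.inl ⟨by rw [List.head?_reverse, hlast, ht], by rw [List.getLast?_reverse, hhead, hs]⟩)
        (List.mem_reverse.mpr h11) (List.mem_reverse.mpr h13) (List.mem_reverse.mpr h32)
    · exact listcore _ hmemgen hchain hnd
        (Or.inr ⟨by rw [hhead, hs], by rw [hlast, ht]⟩) h11 h13 h32
    · exact listcore _ hmemgenR hchainR (List.nodup_reverse.mpr hnd)
        (Or.inr ⟨by rw [List.head?_reverse, hlast, ht], by rw [List.getLast?_reverse, hhead, hs]⟩)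
        (List.mem_reverse.mpr h11) (List.mem_reverse.mpr h13) (List.mem_reverse.mpr h32)
  constructor
  · rintro w ⟨hw, hham⟩
    apply key w hw
    intro v
    have h := hham v
    by_contra hno
    exact hno (hham.mem_support v)
  · intro w hw
    by_contra hlen
    push_neg at hlen
    apply key w hw
    have hLF : ∀ p : ℤ × ℤ, p ∈ LSet m 3 k 1 →
        p ∈ insert ((1:ℤ),(1:ℤ)) ((Finset.Icc 1 m) ×ˢ ({2,3} : Finset ℤ)) := by
      rintro ⟨x, y⟩ ⟨⟨a1, a2, a3, a4⟩, hnot⟩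
      dsimp only at a1 a2 a3 a4 hnot
      simp only [Finset.mem_insert, Finset.mem_product, Finset.mem_Icc,
        Finset.mem_singleton, Prod.mk.injEq]
      omega
    have hsub : (w.support.map Subtype.val).toFinset ⊆
        insert ((1:ℤ),(1:ℤ)) ((Finset.Icc 1 m) ×ˢ ({2,3} : Finset ℤ)) := by
      intro p hp
      rw [List.mem_toFinset] at hp
      obtain ⟨v, hv, rfl⟩ := List.mem_map.mp hp
      exact hLF _ v.2
    have hcard : (insert ((1:ℤ),(1:ℤ)) ((Finset.Icc 1 m) ×ˢ ({2,3} : Finset ℤ))).card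
        = 2 * m.toNat + 1 := by
      rw [Finset.card_insert_of_notMem (by simp), Finset.card_product, Int.card_Icc]
      simp
      omega
    have hnodup : (w.support.map Subtype.val).Nodup :=
      hw.support_nodup.map Subtype.val_injective
    have hlencard : (w.support.map Subtype.val).toFinset.card = w.support.length := by
      rw [List.toFinset_card_of_nodup hnodup, List.length_map]
    have hle : (w.support.map Subtype.val).toFinset.card ≤ 2 * m.toNat + 1 := by
      rw [← hcard]
      exact Finset.card_le_card hsub
    have hge : 2 * m.toNat + 1 ≤ w.support.length := by omega
    have hEq : (w.support.map Subtype.val).toFinset =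
        insert ((1:ℤ),(1:ℤ)) ((Finset.Icc 1 m) ×ˢ ({2,3} : Finset ℤ)) :=
      Finset.eq_of_subset_of_card_le hsub (by omega)
    intro v
    have hvF := hLF _ v.2
    rw [← hEq, List.mem_toFinset] at hvF
    obtain ⟨u, hu, huv⟩ := List.mem_map.mp hvF
    rwa [← Subtype.ext huv]
end

section
/- Let R(m,2) be a rectangular supergrid graph with m ≥ 2, and let s, t be two distinct vertices such that it is not the case that s_x = t_x with 2 ≤ s_x ≤ m−1. Then R(m,2) contains a Hamiltonian (s,t)-path. -/
open SimpleGraph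

lemma sg_adj_s18 {a b c d : ℤ} (h : a ≠ c ∨ b ≠ d) (h1 : a - c ≤ 1) (h2 : c - a ≤ 1)
    (h3 : b - d ≤ 1) (h4 : d - b ≤ 1) : SG.Adj (a, b) (c, d) := by
  refine ⟨?_, by rw [abs_le]; omega, by rw [abs_le]; omega⟩
  intro he
  rw [Prod.ext_iff] at he
  simp only at he
  rcases h with h | h <;> exact h (by omega)

def rowR (x y : ℤ) : ℕ → List (ℤ × ℤ)
  | 0 => []
  | n+1 => (x, y) :: rowR (x+1) y n

def rowL (x y : ℤ) : ℕ → List (ℤ × ℤ)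
  | 0 => []
  | n+1 => (x, y) :: rowL (x-1) y n

def zig (x : ℤ) : ℕ → List (ℤ × ℤ)
  | 0 => []
  | n+1 => (x, 1) :: (x, 2) :: zig (x+1) n

lemma mem_rowR {p : ℤ × ℤ} {x y : ℤ} {n : ℕ} :
    p ∈ rowR x y n ↔ x ≤ p.1 ∧ p.1 < x + n ∧ p.2 = y := by
  induction n generalizing x with
  | zero => simp [rowR]; omega
  | succ n ih => simp [rowR, ih, Prod.ext_iff]; push_cast; omega

lemma mem_rowL {p : ℤ × ℤ} {x y : ℤ} {n : ℕ} :
    p ∈ rowL x y n ↔ x - n < p.1 ∧ p.1 ≤ x ∧ p.2 = y := by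
  induction n generalizing x with
  | zero => simp [rowL]; omega
  | succ n ih => simp [rowL, ih, Prod.ext_iff]; push_cast; omega

lemma mem_zig {p : ℤ × ℤ} {x : ℤ} {n : ℕ} :
    p ∈ zig x n ↔ x ≤ p.1 ∧ p.1 < x + n ∧ (p.2 = 1 ∨ p.2 = 2) := by
  induction n generalizing x with
  | zero => simp [zig]; omega
  | succ n ih => simp [zig, ih, Prod.ext_iff]; push_cast; omega

lemma nodup_rowR (x y : ℤ) (n : ℕ) : (rowR x y n).Nodup := by
  induction n generalizing x with
  | zero => simp [rowR]
  | succ n ih => simp [rowR, mem_rowR, ih]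

lemma nodup_rowL (x y : ℤ) (n : ℕ) : (rowL x y n).Nodup := by
  induction n generalizing x with
  | zero => simp [rowL]
  | succ n ih => simp [rowL, mem_rowL, ih]

lemma nodup_zig (x : ℤ) (n : ℕ) : (zig x n).Nodup := by
  induction n generalizing x with
  | zero => simp [zig]
  | succ n ih => simp [zig, mem_zig, Prod.ext_iff, ih]

lemma head?_rowR (x y : ℤ) (n : ℕ) (h : n ≠ 0) : (rowR x y n).head? = some (x, y) := by
  cases n with
  | zero => omega
  | succ n => simp [rowR]

lemma head?_rowL (x y : ℤ) (n : ℕ) (h : n ≠ 0) : (rowL x y n).head? = some (x, y) := by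
  cases n with
  | zero => omega
  | succ n => simp [rowL]

lemma head?_zig (x : ℤ) (n : ℕ) (h : n ≠ 0) : (zig x n).head? = some (x, 1) := by
  cases n with
  | zero => omega
  | succ n => simp [zig]


lemma getLast?_rowR (x y : ℤ) (n : ℕ) (h : n ≠ 0) :
    (rowR x y n).getLast? = some (x + n - 1, y) := by
  induction n generalizing x with
  | zero => omega
  | succ n ih =>
    cases n with
    | zero => simp [rowR]
    | succ k =>
      rw [rowR, List.getLast?_cons, ih _ (by omega)]
      simp [Prod.ext_iff]
      push_cast
      omega

lemma getLast?_rowL (x y : ℤ) (n : ℕ) (h : n ≠ 0) :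
    (rowL x y n).getLast? = some (x - n + 1, y) := by
  induction n generalizing x with
  | zero => omega
  | succ n ih =>
    cases n with
    | zero => simp [rowL]
    | succ k =>
      rw [rowL, List.getLast?_cons, ih _ (by omega)]
      simp [Prod.ext_iff]
      push_cast
      omega

lemma getLast?_zig (x : ℤ) (n : ℕ) (h : n ≠ 0) :
    (zig x n).getLast? = some (x + n - 1, 2) := by
  induction n generalizing x with
  | zero => omega
  | succ n ih =>
    cases n with
    | zero => simp [zig]
    | succ k =>
      rw [zig, List.getLast?_cons, List.getLast?_cons, ih _ (by omega)]
      simp [Prod.ext_iff]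
      push_cast
      omega

lemma chain'_rowR (x y : ℤ) (n : ℕ) : (rowR x y n).Chain' SG.Adj := by
  induction n generalizing x with
  | zero => simp [rowR]; exact List.isChain_nil
  | succ n ih =>
    unfold List.Chain'
    rw [rowR, List.isChain_cons]
    refine ⟨?_, ih _⟩
    intro b hb
    cases n with
    | zero => simp [rowR] at hb
    | succ k =>
      rw [head?_rowR _ _ _ (by omega)] at hb
      cases hb
      exact sg_adj_s18 (by omega) (by omega) (by omega) (by omega) (by omega)

lemma chain'_rowL (x y : ℤ) (n : ℕ) : (rowL x y n).Chain' SG.Adj := by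
  induction n generalizing x with
  | zero => simp [rowL]; exact List.isChain_nil
  | succ n ih =>
    unfold List.Chain'
    rw [rowL, List.isChain_cons]
    refine ⟨?_, ih _⟩
    intro b hb
    cases n with
    | zero => simp [rowL] at hb
    | succ k =>
      rw [head?_rowL _ _ _ (by omega)] at hb
      cases hb
      exact sg_adj_s18 (by omega) (by omega) (by omega) (by omega) (by omega)

lemma chain'_zig (x : ℤ) (n : ℕ) : (zig x n).Chain' SG.Adj := by
  induction n generalizing x with
  | zero => simp [zig]; exact List.isChain_nil
  | succ n ih =>
    unfold List.Chain'
    rw [zig, List.isChain_cons_cons, List.isChain_cons]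
    refine ⟨sg_adj_s18 (by omega) (by omega) (by omega) (by omega) (by omega), ?_, ih _⟩
    intro b hb
    cases n with
    | zero => simp [zig] at hb
    | succ k =>
      rw [head?_zig _ _ (by omega)] at hb
      cases hb
      exact sg_adj_s18 (by omega) (by omega) (by omega) (by omega) (by omega)

def wc {V : Type*} (G : SimpleGraph V) :
    (l : List V) → (h : l ≠ []) → l.Chain' G.Adj → G.Walk (l.head h) (l.getLast h)
  | [a], _, _ => Walk.nil
  | a :: b :: l, _, hc =>
    Walk.cons (List.isChain_cons_cons.mp hc).1
      ((wc G (b :: l) (by simp) (List.isChain_cons_cons.mp hc).2).copy rfl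
        (List.getLast_cons (by simp)).symm)

lemma wc_support {V : Type*} (G : SimpleGraph V) :
    ∀ (l : List V) (h : l ≠ []) (hc : l.Chain' G.Adj), (wc G l h hc).support = l
  | [a], _, _ => by simp [wc]
  | a :: b :: l, _, hc => by
    rw [wc]
    exact congrArg (a :: ·) ((Walk.support_copy _ _ _).trans (wc_support _ _ _ _))

lemma glue (m : ℤ) (s t : RectSet m 2) (L : List (ℤ × ℤ))
    (hmem : ∀ p ∈ L, p ∈ RectSet m 2)
    (hchain : L.Chain' SG.Adj)
    (hnodup : L.Nodup)
    (hcover : ∀ p ∈ RectSet m 2, p ∈ L)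
    (hhead : L.head? = some s.val)
    (hlast : L.getLast? = some t.val) :
    ∃ w : (Rect m 2).Walk s t, w.IsPath ∧ w.IsHamiltonian := by
  classical
  set L' : List (RectSet m 2) := L.attachWith (· ∈ RectSet m 2) hmem with hL'
  have hmap : L'.map Subtype.val = L := List.attachWith_map_subtype_val _
  have hne : L ≠ [] := by rintro rfl; simp at hhead
  have hne' : L' ≠ [] := by
    intro h0; apply hne; rw [← hmap, h0]; rfl
  have hchain' : L'.Chain' (Rect m 2).Adj := by
    have := (List.isChain_map (Subtype.val) (l := L')).mp (by rw [hmap]; exact hchain)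
    exact this
  have hnodup' : L'.Nodup := (hmap ▸ hnodup : (L'.map Subtype.val).Nodup).of_map
  have hmem' : ∀ v : RectSet m 2, v ∈ L' := by
    intro v
    have : v.val ∈ L'.map Subtype.val := by rw [hmap]; exact hcover v.val v.2
    obtain ⟨u, hu, he⟩ := List.mem_map.mp this
    exact (Subtype.ext he : u = v) ▸ hu
  have hh : L'.head hne' = s := by
    apply Subtype.ext
    have : (L'.map Subtype.val).head? = some s.val := by rw [hmap]; exact hhead
    rw [List.head?_map, List.head?_eq_head hne'] at this
    simpa using this
  have hl : L'.getLast hne' = t := by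
    apply Subtype.ext
    have : (L'.map Subtype.val).getLast? = some t.val := by rw [hmap]; exact hlast
    rw [List.getLast?_map, List.getLast?_eq_getLast hne'] at this
    simpa using this
  refine ⟨(wc (Rect m 2) L' hne' hchain').copy hh hl, ?_, ?_⟩
  · rw [Walk.isPath_def, Walk.support_copy, wc_support]; exact hnodup'
  · intro v
    rw [Walk.support_copy, wc_support]
    exact @List.count_eq_one_of_mem _ instBEqOfDecidableEq _ _ _ hnodup' (hmem' v)

lemma case_lt (m : ℤ) (hm : 2 ≤ m) (s t : RectSet m 2) (hab : s.val.1 < t.val.1) :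
    ∃ w : (Rect m 2).Walk s t, w.IsPath ∧ w.IsHamiltonian := by
  obtain ⟨⟨a, p⟩, hs⟩ := s
  obtain ⟨⟨b, q⟩, ht⟩ := t
  obtain ⟨ha1, ham, hp1, hp2⟩ := hs
  obtain ⟨hb1, hbm, hq1, hq2⟩ := ht
  simp only at ha1 ham hp1 hp2 hb1 hbm hq1 hq2 hab ⊢
  apply glue m _ _ (rowL a p a.toNat ++ (rowR 1 (3-p) a.toNat ++ (zig (a+1) (b-1-a).toNat
      ++ (rowR b (3-q) (m-b+1).toNat ++ rowL m q (m-b+1).toNat))))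
  · intro r hr
    simp only [List.mem_append, mem_rowR, mem_rowL, mem_zig] at hr
    refine ⟨by omega, by omega, by omega, by omega⟩
  · unfold List.Chain'
    rw [List.isChain_append, List.isChain_append, List.isChain_append, List.isChain_append]
    refine ⟨chain'_rowL _ _ _, ⟨chain'_rowR _ _ _, ⟨chain'_zig _ _,
      ⟨chain'_rowR _ _ _, chain'_rowL _ _ _, ?_⟩, ?_⟩, ?_⟩, ?_⟩
    · -- rowR b .. to rowL m ..
      rw [getLast?_rowR _ _ _ (by omega)]
      intro x hx y hy
      rw [head?_rowL _ _ _ (by omega)] at hy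
      cases hx; cases hy
      exact sg_adj_s18 (by omega) (by omega) (by omega) (by omega) (by omega)
    · -- zig to rowR b
      by_cases hz : (b - 1 - a).toNat = 0
      · rw [hz]; intro x hx; simp [zig] at hx
      · rw [getLast?_zig _ _ hz]
        intro x hx y hy
        rw [List.head?_append, head?_rowR _ _ _ (by omega), Option.some_or] at hy
        cases hx; cases hy
        exact sg_adj_s18 (by omega) (by omega) (by omega) (by omega) (by omega)
    · -- rowR 1 (3-p) to zig / rowR b
      rw [getLast?_rowR _ _ _ (by omega)]
      intro x hx y hy
      cases hx
      by_cases hz : (b - 1 - a).toNat = 0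
      · rw [List.head?_append, hz, List.head?_append, head?_rowR _ _ _ (by omega)] at hy
        simp [zig] at hy
        cases hy
        exact sg_adj_s18 (by omega) (by omega) (by omega) (by omega) (by omega)
      · rw [List.head?_append, head?_zig _ _ hz, Option.some_or] at hy
        cases hy
        exact sg_adj_s18 (by omega) (by omega) (by omega) (by omega) (by omega)
    · -- rowL a p to rowR 1 (3-p)
      rw [getLast?_rowL _ _ _ (by omega)]
      intro x hx y hy
      rw [List.head?_append, head?_rowR _ _ _ (by omega), Option.some_or] at hy
      cases hx; cases hy
      exact sg_adj_s18 (by omega) (by omega) (by omega) (by omega) (by omega)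
  · simp only [List.nodup_append, List.disjoint_left, List.mem_append, mem_rowR, mem_rowL,
      mem_zig, not_or]
    refine ⟨nodup_rowL _ _ _, ⟨nodup_rowR _ _ _, ⟨nodup_zig _ _,
      ⟨nodup_rowR _ _ _, nodup_rowL _ _ _, ?_⟩, ?_⟩, ?_⟩, ?_⟩ <;>
      · rintro r h1 b h2 rfl
        omega
  · intro r hr
    obtain ⟨h1, h2, h3, h4⟩ := hr
    simp only [List.mem_append, mem_rowR, mem_rowL, mem_zig]
    omega
  · rw [List.head?_append, head?_rowL _ _ _ (by omega), Option.some_or]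
  · rw [List.getLast?_append, List.getLast?_append, List.getLast?_append,
      List.getLast?_append, getLast?_rowL m q (m-b+1).toNat (by omega), Option.some_or,
      Option.some_or, Option.some_or, Option.some_or]
    show _ = some ((b : ℤ), (q : ℤ))
    simp only [Option.some.injEq, Prod.mk.injEq]
    exact ⟨by omega, trivial⟩

lemma case_col1 (m : ℤ) (hm : 2 ≤ m) (s t : RectSet m 2) (ha : s.val.1 = 1)
    (hb : t.val.1 = 1) (hpq : s.val.2 ≠ t.val.2) :
    ∃ w : (Rect m 2).Walk s t, w.IsPath ∧ w.IsHamiltonian := by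
  obtain ⟨⟨a, p⟩, hs⟩ := s
  obtain ⟨⟨b, q⟩, ht⟩ := t
  obtain ⟨ha1, ham, hp1, hp2⟩ := hs
  obtain ⟨hb1, hbm, hq1, hq2⟩ := ht
  simp only at ha1 ham hp1 hp2 hb1 hbm hq1 hq2 ha hb hpq ⊢
  apply glue m _ _ (rowR a p m.toNat ++ rowL m q m.toNat)
  · intro r hr
    simp only [List.mem_append, mem_rowR, mem_rowL] at hr
    refine ⟨by omega, by omega, by omega, by omega⟩
  · unfold List.Chain'
    rw [List.isChain_append]
    refine ⟨chain'_rowR _ _ _, chain'_rowL _ _ _, ?_⟩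
    rw [getLast?_rowR _ _ _ (by omega), head?_rowL _ _ _ (by omega)]
    intro x hx y hy
    cases hx; cases hy
    exact sg_adj_s18 (by omega) (by omega) (by omega) (by omega) (by omega)
  · simp only [List.nodup_append, List.disjoint_left, mem_rowR, mem_rowL]
    refine ⟨nodup_rowR _ _ _, nodup_rowL _ _ _, ?_⟩
    rintro r h1 b h2 rfl
    omega
  · intro r hr
    obtain ⟨h1, h2, h3, h4⟩ := hr
    simp only [List.mem_append, mem_rowR, mem_rowL]
    omega
  · rw [List.head?_append, head?_rowR _ _ _ (by omega), Option.some_or]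
  · rw [List.getLast?_append, getLast?_rowL m q m.toNat (by omega), Option.some_or]
    show _ = some ((b : ℤ), (q : ℤ))
    simp only [Option.some.injEq, Prod.mk.injEq]
    exact ⟨by omega, trivial⟩

lemma case_colm (m : ℤ) (hm : 2 ≤ m) (s t : RectSet m 2) (ha : s.val.1 = m)
    (hb : t.val.1 = m) (hpq : s.val.2 ≠ t.val.2) :
    ∃ w : (Rect m 2).Walk s t, w.IsPath ∧ w.IsHamiltonian := by
  obtain ⟨⟨a, p⟩, hs⟩ := s
  obtain ⟨⟨b, q⟩, ht⟩ := t
  obtain ⟨ha1, ham, hp1, hp2⟩ := hs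
  obtain ⟨hb1, hbm, hq1, hq2⟩ := ht
  simp only at ha1 ham hp1 hp2 hb1 hbm hq1 hq2 ha hb hpq ⊢
  apply glue m _ _ (rowL a p m.toNat ++ rowR 1 q m.toNat)
  · intro r hr
    simp only [List.mem_append, mem_rowR, mem_rowL] at hr
    refine ⟨by omega, by omega, by omega, by omega⟩
  · unfold List.Chain'
    rw [List.isChain_append]
    refine ⟨chain'_rowL _ _ _, chain'_rowR _ _ _, ?_⟩
    rw [getLast?_rowL _ _ _ (by omega), head?_rowR _ _ _ (by omega)]
    intro x hx y hy
    cases hx; cases hy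
    exact sg_adj_s18 (by omega) (by omega) (by omega) (by omega) (by omega)
  · simp only [List.nodup_append, List.disjoint_left, mem_rowR, mem_rowL]
    refine ⟨nodup_rowL _ _ _, nodup_rowR _ _ _, ?_⟩
    rintro r h1 b h2 rfl
    omega
  · intro r hr
    obtain ⟨h1, h2, h3, h4⟩ := hr
    simp only [List.mem_append, mem_rowR, mem_rowL]
    omega
  · rw [List.head?_append, head?_rowL _ _ _ (by omega), Option.some_or]
  · rw [List.getLast?_append, getLast?_rowR 1 q m.toNat (by omega), Option.some_or]
    show _ = some ((b : ℤ), (q : ℤ))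
    simp only [Option.some.injEq, Prod.mk.injEq]
    exact ⟨by omega, trivial⟩

/-- For m ≥ 2 and distinct s,t in R(m,2) not satisfying
(s_x = t_x with 2 ≤ s_x ≤ m-1), R(m,2) has a Hamiltonian (s,t)-path. -/
theorem stmt_18 (m : ℤ) (hm : 2 ≤ m) (s t : RectSet m 2) (hst : s ≠ t)
    (h : ¬ (s.val.1 = t.val.1 ∧ 2 ≤ s.val.1 ∧ s.val.1 ≤ m - 1)) :
    ∃ w : (Rect m 2).Walk s t, w.IsPath ∧ w.IsHamiltonian := by
  rcases lt_trichotomy s.val.1 t.val.1 with hlt | heq | hgt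
  · exact case_lt m hm s t hlt
  · have hs2 := s.2
    have ht2 := t.2
    obtain ⟨ha1, ham, hp1, hp2⟩ := hs2
    obtain ⟨hb1, hbm, hq1, hq2⟩ := ht2
    have hpq : s.val.2 ≠ t.val.2 := by
      intro hy
      exact hst (Subtype.ext (Prod.ext heq hy))
    have : s.val.1 = 1 ∨ s.val.1 = m := by omega
    rcases this with h1 | h1
    · exact case_col1 m hm s t h1 (heq ▸ h1) hpq
    · exact case_colm m hm s t h1 (heq ▸ h1) hpq
  · obtain ⟨w, hp, hh⟩ := case_lt m hm t s hgt
    refine ⟨w.reverse, hp.reverse, ?_⟩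
    intro v
    rw [Walk.support_reverse, @List.count_reverse _ instBEqOfDecidableEq]
    exact hh v
end

section
/- For m ≥ n ≥ 3, every pair of distinct vertices s, t of the rectangular supergrid graph R(m,n) admits a Hamiltonian (s,t)-path; that is, R(m,n) is Hamiltonian connected for m, n ≥ 3. -/
open SimpleGraph

namespace HCP

/-- supergrid adjacency as a plain relation -/
def A (p q : ℤ × ℤ) : Prop := p ≠ q ∧ |p.1 - q.1| ≤ 1 ∧ |p.2 - q.2| ≤ 1

lemma adj_iff {p q : ℤ × ℤ} : A p q ↔
    (¬(p.1 = q.1 ∧ p.2 = q.2) ∧ p.1 - q.1 ≤ 1 ∧ q.1 - p.1 ≤ 1 ∧ p.2 - q.2 ≤ 1 ∧ q.2 - p.2 ≤ 1) := by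
  unfold A
  rw [Ne, Prod.ext_iff, abs_le, abs_le]
  constructor
  · rintro ⟨h1, ⟨h2, h3⟩, ⟨h4, h5⟩⟩; exact ⟨h1, h3, by omega, h5, by omega⟩
  · rintro ⟨h1, h2, h3, h4, h5⟩; exact ⟨h1, ⟨by omega, h2⟩, ⟨by omega, h4⟩⟩

lemma adj_mk {x y x' y' : ℤ} (h : ¬(x = x' ∧ y = y')) (h1 : x - x' ≤ 1) (h2 : x' - x ≤ 1)
    (h3 : y - y' ≤ 1) (h4 : y' - y ≤ 1) : A (x, y) (x', y') := by
  rw [adj_iff]; exact ⟨h, h1, h2, h3, h4⟩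

lemma A.symm {p q : ℤ × ℤ} (h : A p q) : A q p := by
  rw [adj_iff] at h ⊢; tauto

/-- A "good" list: a Hamiltonian path of the set S from s to t. -/
structure Good (S : ℤ × ℤ → Prop) (s t : ℤ × ℤ) (l : List (ℤ × ℤ)) : Prop where
  chain : l.IsChain A
  nodup : l.Nodup
  cover : ∀ p, p ∈ l ↔ S p
  head : l.head? = some s
  last : l.getLast? = some t

def HP (S : ℤ × ℤ → Prop) (s t : ℤ × ℤ) : Prop := ∃ l, Good S s t l

lemma HP.congr {S S' : ℤ × ℤ → Prop} {s t : ℤ × ℤ} (h : HP S s t)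
    (hS : ∀ p, S p ↔ S' p) : HP S' s t := by
  obtain ⟨l, hl⟩ := h
  exact ⟨l, hl.chain, hl.nodup, fun p => (hl.cover p).trans (hS p), hl.head, hl.last⟩

lemma HP.single (s : ℤ × ℤ) : HP (fun p => p = s) s s :=
  ⟨[s], List.isChain_singleton s, List.nodup_singleton s, fun p => by simp, rfl, rfl⟩

lemma HP.append {S1 S2 : ℤ × ℤ → Prop} {s u v t : ℤ × ℤ}
    (h1 : HP S1 s u) (h2 : HP S2 v t) (huv : A u v)
    (hdisj : ∀ p, S1 p → S2 p → False) :
    HP (fun p => S1 p ∨ S2 p) s t := by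
  obtain ⟨l1, g1⟩ := h1
  obtain ⟨l2, g2⟩ := h2
  have hl1 : l1 ≠ [] := by intro h; rw [h] at g1; exact absurd g1.head (by simp)
  have hl2 : l2 ≠ [] := by intro h; rw [h] at g2; exact absurd g2.head (by simp)
  refine ⟨l1 ++ l2, ?_, ?_, ?_, ?_, ?_⟩
  · rw [List.isChain_append]
    refine ⟨g1.chain, g2.chain, fun x hx y hy => ?_⟩
    rw [g1.last] at hx; rw [g2.head] at hy
    cases hx; cases hy; exact huv
  · refine g1.nodup.append g2.nodup (fun p hp1 hp2 => ?_)
    exact hdisj p ((g1.cover p).mp hp1) ((g2.cover p).mp hp2)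
  · intro p; rw [List.mem_append, g1.cover p, g2.cover p]
  · rw [List.head?_append_of_ne_nil _ hl1]; exact g1.head
  · rw [List.getLast?_append_of_ne_nil _ hl2]; exact g2.last

lemma HP.reverse {S : ℤ × ℤ → Prop} {s t : ℤ × ℤ} (h : HP S s t) : HP S t s := by
  obtain ⟨l, g⟩ := h
  refine ⟨l.reverse, ?_, (List.nodup_reverse.mpr g.nodup), ?_, ?_, ?_⟩
  · rw [List.isChain_reverse]; exact g.chain.imp (fun a b h => h.symm)
  · intro p; rw [List.mem_reverse]; exact g.cover p
  · rw [List.head?_reverse]; exact g.last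
  · rw [List.getLast?_reverse]; exact g.head

lemma HP.map {S : ℤ × ℤ → Prop} {s t : ℤ × ℤ} (f : ℤ × ℤ → ℤ × ℤ)
    (hf : ∀ p q, A p q → A (f p) (f q)) (hinj : Function.Injective f)
    (h : HP S s t) : HP (fun q => ∃ p, S p ∧ f p = q) (f s) (f t) := by
  obtain ⟨l, g⟩ := h
  refine ⟨l.map f, ?_, g.nodup.map hinj, ?_, ?_, ?_⟩
  · rw [List.isChain_map]; exact g.chain.imp (fun a b h => hf a b h)
  · intro p; rw [List.mem_map]
    constructor
    · rintro ⟨q, hq, rfl⟩; exact ⟨q, (g.cover q).mp hq, rfl⟩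
    · rintro ⟨q, hq, rfl⟩; exact ⟨q, (g.cover q).mpr hq, rfl⟩
  · rw [List.head?_map, g.head]; rfl
  · rw [List.getLast?_map, g.last]; rfl

end HCP

namespace HCP

/-! ### straight segments -/

def up (x y : ℤ) : ℕ → List (ℤ × ℤ)
  | 0 => []
  | k+1 => (x, y) :: up x (y+1) k

lemma up_head (x y : ℤ) (k : ℕ) : (up x y (k+1)).head? = some (x, y) := rfl

lemma up_last (x : ℤ) : ∀ (k : ℕ) (y : ℤ), (up x y (k+1)).getLast? = some (x, y + k)
  | 0, y => by simp [up]
  | k+1, y => by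
    rw [up, up, List.getLast?_cons_cons, ← up, up_last x k (y+1)]
    congr 2; push_cast; ring

lemma mem_up (x : ℤ) : ∀ (k : ℕ) (y : ℤ) (p : ℤ × ℤ),
    p ∈ up x y k ↔ p.1 = x ∧ y ≤ p.2 ∧ p.2 < y + k
  | 0, y, p => by simp [up]
  | k+1, y, p => by
    rw [up, List.mem_cons, mem_up x k (y+1) p]
    constructor
    · rintro (rfl | ⟨h1, h2, h3⟩)
      · exact ⟨rfl, le_refl _, by omega⟩
      · exact ⟨h1, by omega, by push_cast at h3 ⊢; omega⟩
    · rintro ⟨h1, h2, h3⟩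
      push_cast at h3
      by_cases hy : p.2 = y
      · left; rw [Prod.ext_iff]; exact ⟨h1, hy⟩
      · right; exact ⟨h1, by omega, by omega⟩

lemma up_chain (x : ℤ) : ∀ (k : ℕ) (y : ℤ), (up x y k).IsChain A
  | 0, y => List.isChain_nil
  | k+1, y => by
    rw [up, List.isChain_cons]
    refine ⟨fun q hq => ?_, up_chain x k (y+1)⟩
    match k, hq with
    | k+1, hq =>
      rw [up_head] at hq; cases hq
      exact adj_mk (by omega) (by omega) (by omega) (by omega) (by omega)

lemma up_nodup (x : ℤ) : ∀ (k : ℕ) (y : ℤ), (up x y k).Nodup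
  | 0, y => List.nodup_nil
  | k+1, y => by
    rw [up, List.nodup_cons]
    refine ⟨fun h => ?_, up_nodup x k (y+1)⟩
    rw [mem_up] at h; omega

lemma upHP (x y y' : ℤ) (h : y ≤ y') :
    HP (fun p => p.1 = x ∧ y ≤ p.2 ∧ p.2 ≤ y') (x, y) (x, y') := by
  refine ⟨up x y ((y' - y).toNat + 1), up_chain x _ y, up_nodup x _ y, ?_, up_head x y _, ?_⟩
  · intro p; rw [mem_up]; push_cast; omega
  · rw [up_last]; congr 2; omega

lemma downHP (x y y' : ℤ) (h : y' ≤ y) :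
    HP (fun p => p.1 = x ∧ y' ≤ p.2 ∧ p.2 ≤ y) (x, y) (x, y') :=
  (upHP x y' y h).reverse

/-! ### coordinate transformations -/

def sw (p : ℤ × ℤ) : ℤ × ℤ := (p.2, p.1)

lemma sw_adj (p q : ℤ × ℤ) (h : A p q) : A (sw p) (sw q) := by
  rw [adj_iff] at h ⊢; unfold sw; simp only; tauto

lemma sw_inj : Function.Injective sw := by
  intro a b h; unfold sw at h; rw [Prod.ext_iff] at h ⊢; simp only at h; tauto

lemma rightHP (y x x' : ℤ) (h : x ≤ x') :
    HP (fun p => p.2 = y ∧ x ≤ p.1 ∧ p.1 ≤ x') (x, y) (x', y) := by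
  have := (upHP y x x' h).map sw sw_adj sw_inj
  refine this.congr (fun p => ?_)
  constructor
  · rintro ⟨q, hq, rfl⟩; unfold sw; simp only; tauto
  · rintro ⟨h1, h2, h3⟩; exact ⟨sw p, ⟨h1, h2, h3⟩, rfl⟩

lemma leftHP (y x x' : ℤ) (h : x' ≤ x) :
    HP (fun p => p.2 = y ∧ x' ≤ p.1 ∧ p.1 ≤ x) (x, y) (x', y) :=
  (rightHP y x' x h).reverse

/-! ### 2-row snake -/

def snk (w w' x : ℤ) : ℕ → List (ℤ × ℤ)
  | 0 => []
  | k+1 => (x, w) :: (x, w') :: snk w w' (x+1) k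

lemma snk_head (w w' x : ℤ) (k : ℕ) : (snk w w' x (k+1)).head? = some (x, w) := rfl

lemma snk_last (w w' : ℤ) : ∀ (k : ℕ) (x : ℤ), (snk w w' x (k+1)).getLast? = some (x + k, w')
  | 0, x => by simp [snk]
  | k+1, x => by
    have IH := snk_last w w' k (x+1)
    rw [snk] at IH
    rw [snk, List.getLast?_cons_cons, snk, List.getLast?_cons_cons, IH]
    congr 2; push_cast; ring

lemma mem_snk (w w' : ℤ) : ∀ (k : ℕ) (x : ℤ) (p : ℤ × ℤ),
    p ∈ snk w w' x k ↔ (x ≤ p.1 ∧ p.1 < x + k ∧ (p.2 = w ∨ p.2 = w'))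
  | 0, x, p => by simp [snk]; omega
  | k+1, x, p => by
    rw [snk, List.mem_cons, List.mem_cons, mem_snk w w' k (x+1) p]
    push_cast
    constructor
    · rintro (rfl | rfl | ⟨h1, h2, h3⟩)
      · exact ⟨le_refl _, by omega, Or.inl rfl⟩
      · exact ⟨le_refl _, by omega, Or.inr rfl⟩
      · exact ⟨by omega, by omega, h3⟩
    · rintro ⟨h1, h2, h3⟩
      by_cases hx : p.1 = x
      · rcases h3 with h3 | h3
        · left; rw [Prod.ext_iff]; exact ⟨hx, h3⟩
        · right; left; rw [Prod.ext_iff]; exact ⟨hx, h3⟩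
      · right; right; exact ⟨by omega, by omega, h3⟩

lemma snk_chain (w w' : ℤ) (hw : ¬ w = w') (hww : w - w' ≤ 1) (hww' : w' - w ≤ 1) :
    ∀ (k : ℕ) (x : ℤ), (snk w w' x k).IsChain A
  | 0, x => List.isChain_nil
  | k+1, x => by
    rw [snk, List.isChain_cons_cons]
    refine ⟨adj_mk (by omega) (by omega) (by omega) (by omega) (by omega), ?_⟩
    rw [List.isChain_cons]
    refine ⟨fun q hq => ?_, snk_chain w w' hw hww hww' k (x+1)⟩
    match k, hq with
    | k+1, hq =>
      rw [snk_head] at hq; cases hq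
      exact adj_mk (by omega) (by omega) (by omega) (by omega) (by omega)

lemma snk_nodup (w w' : ℤ) (hw : ¬ w = w') : ∀ (k : ℕ) (x : ℤ), (snk w w' x k).Nodup
  | 0, x => List.nodup_nil
  | k+1, x => by
    rw [snk, List.nodup_cons, List.nodup_cons]
    refine ⟨?_, ?_, snk_nodup w w' hw k (x+1)⟩
    · rw [List.mem_cons, mem_snk]
      rintro (h | h)
      · rw [Prod.ext_iff] at h; exact hw h.2
      · omega
    · rw [mem_snk]; omega

lemma snkHP (w w' x x' : ℤ) (h : x ≤ x') (hw : ¬ w = w') (hww : w - w' ≤ 1) (hww' : w' - w ≤ 1) :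
    HP (fun p => x ≤ p.1 ∧ p.1 ≤ x' ∧ (p.2 = w ∨ p.2 = w')) (x, w) (x', w') := by
  refine ⟨snk w w' x ((x' - x).toNat + 1), snk_chain w w' hw hww hww' _ x,
    snk_nodup w w' hw _ x, ?_, snk_head w w' x _, ?_⟩
  · intro p; rw [mem_snk]; push_cast; omega
  · rw [snk_last]; congr 2; omega

end HCP

namespace HCP

def Box (M N : ℤ) (p : ℤ × ℤ) : Prop := 1 ≤ p.1 ∧ p.1 ≤ M ∧ 1 ≤ p.2 ∧ p.2 ≤ N

def HC (M N : ℤ) (s t : ℤ × ℤ) : Prop := HP (Box M N) s t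

lemma HC.symm {M N : ℤ} {s t : ℤ × ℤ} (h : HC M N s t) : HC M N t s := HP.reverse h

lemma HC.transpose {M N : ℤ} {s t : ℤ × ℤ} (h : HC M N s t) :
    HC N M (s.2, s.1) (t.2, t.1) := by
  refine (HP.map sw sw_adj sw_inj h).congr (fun p => ?_)
  constructor
  · rintro ⟨q, hq, rfl⟩; exact ⟨hq.2.2.1, hq.2.2.2, hq.1, hq.2.1⟩
  · rintro ⟨h1, h2, h3, h4⟩; exact ⟨sw p, ⟨h3, h4, h1, h2⟩, rfl⟩

def rx (c : ℤ) (p : ℤ × ℤ) : ℤ × ℤ := (c - p.1, p.2)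

lemma rx_adj (c : ℤ) (p q : ℤ × ℤ) (h : A p q) : A (rx c p) (rx c q) := by
  rw [adj_iff] at h ⊢; unfold rx; simp only; omega

lemma rx_inj (c : ℤ) : Function.Injective (rx c) := by
  intro a b h; unfold rx at h; rw [Prod.ext_iff] at h ⊢; simp only at h; omega

lemma HC.reflX {M N : ℤ} {s t : ℤ × ℤ} (h : HC M N s t) :
    HC M N (M + 1 - s.1, s.2) (M + 1 - t.1, t.2) := by
  refine (HP.map (rx (M+1)) (rx_adj _) (rx_inj _) h).congr (fun p => ?_)
  constructor
  · rintro ⟨q, hq, rfl⟩; simp only [rx, Box] at hq ⊢; omega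
  · rintro hp; exact ⟨rx (M+1) p, by simp only [rx, Box] at hp ⊢; omega,
      by simp only [rx, Prod.ext_iff]; constructor <;> simp <;> omega⟩

def ry (c : ℤ) (p : ℤ × ℤ) : ℤ × ℤ := (p.1, c - p.2)

lemma ry_adj (c : ℤ) (p q : ℤ × ℤ) (h : A p q) : A (ry c p) (ry c q) := by
  rw [adj_iff] at h ⊢; unfold ry; simp only; omega

lemma ry_inj (c : ℤ) : Function.Injective (ry c) := by
  intro a b h; unfold ry at h; rw [Prod.ext_iff] at h ⊢; simp only at h; omega

lemma HC.reflY {M N : ℤ} {s t : ℤ × ℤ} (h : HC M N s t) :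
    HC M N (s.1, N + 1 - s.2) (t.1, N + 1 - t.2) := by
  refine (HP.map (ry (N+1)) (ry_adj _) (ry_inj _) h).congr (fun p => ?_)
  constructor
  · rintro ⟨q, hq, rfl⟩; simp only [ry, Box] at hq ⊢; omega
  · rintro hp; exact ⟨ry (N+1) p, by simp only [ry, Box] at hp ⊢; omega,
      by simp only [ry, Prod.ext_iff]; constructor <;> simp <;> omega⟩

def tr (u v : ℤ) (p : ℤ × ℤ) : ℤ × ℤ := (p.1 + u, p.2 + v)

lemma tr_adj (u v : ℤ) (p q : ℤ × ℤ) (h : A p q) : A (tr u v p) (tr u v q) := by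
  rw [adj_iff] at h ⊢; unfold tr; simp only; omega

lemma tr_inj (u v : ℤ) : Function.Injective (tr u v) := by
  intro a b h; unfold tr at h; rw [Prod.ext_iff] at h ⊢; simp only at h; omega

/-- a Hamiltonian path of a translated box -/
lemma HC.shift {M N : ℤ} {s t : ℤ × ℤ} (u v : ℤ) (h : HC M N s t) :
    HP (fun p => u + 1 ≤ p.1 ∧ p.1 ≤ u + M ∧ v + 1 ≤ p.2 ∧ p.2 ≤ v + N)
      (s.1 + u, s.2 + v) (t.1 + u, t.2 + v) := by
  refine (HP.map (tr u v) (tr_adj _ _) (tr_inj _ _) h).congr (fun p => ?_)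
  constructor
  · rintro ⟨q, hq, rfl⟩; simp only [tr, Box] at hq ⊢; omega
  · rintro hp; exact ⟨(p.1 - u, p.2 - v), by simp only [tr, Box]; omega,
      by simp only [tr, Prod.ext_iff]; constructor <;> simp⟩

end HCP

namespace HCP

lemma aux_walk {m n : ℤ} : ∀ (l : List (ℤ × ℤ)) (s t : RectSet m n), l.IsChain A →
    l.head? = some s.val → l.getLast? = some t.val → (∀ p ∈ l, p ∈ RectSet m n) →
    ∃ w : (Rect m n).Walk s t, w.support.map Subtype.val = l
  | [], s, t, _, hh, _, _ => by simp at hh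
  | [x], s, t, _, hh, hl, _ => by
    have hx : x = s.val := by simpa using hh
    have hx' : x = t.val := by simpa using hl
    have hst : s = t := Subtype.ext (hx ▸ hx' ▸ rfl)
    subst hst
    exact ⟨SimpleGraph.Walk.nil, by simp [hx]⟩
  | x :: y :: r, s, t, hc, hh, hl, hm => by
    have hx : x = s.val := by simpa using hh
    have hy : y ∈ RectSet m n := hm y (by simp)
    have hA : A x y := (List.isChain_cons_cons.mp hc).1
    have hadj : (Rect m n).Adj s ⟨y, hy⟩ := by
      show SG.Adj s.val y
      rw [← hx]; exact hA
    obtain ⟨w', hw'⟩ := aux_walk (y :: r) ⟨y, hy⟩ t (List.isChain_cons_cons.mp hc).2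
      (by simp) (by rw [← List.getLast?_cons_cons (a := x)]; exact hl)
      (fun p hp => hm p (by simp [hp]))
    exact ⟨SimpleGraph.Walk.cons hadj w', by simp only [SimpleGraph.Walk.support_cons,
      List.map_cons, hw', hx]⟩

lemma exists_walk {m n : ℤ} (s t : RectSet m n) (h : HC m n s.val t.val) :
    ∃ w : (Rect m n).Walk s t, w.IsPath ∧ w.IsHamiltonian := by
  obtain ⟨l, g⟩ := h
  have hmem : ∀ p ∈ l, p ∈ RectSet m n := fun p hp => (g.cover p).mp hp
  obtain ⟨w, hw⟩ := aux_walk l s t g.chain g.head g.last hmem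
  refine ⟨w, ?_, ?_⟩
  · rw [SimpleGraph.Walk.isPath_def]
    exact List.Nodup.of_map Subtype.val (hw ▸ g.nodup)
  · intro v
    have hv : v.val ∈ l := (g.cover v.val).mpr v.property
    rw [← hw] at hv
    obtain ⟨u, hu, huv⟩ := List.mem_map.mp hv
    have : u = v := Subtype.ext huv
    subst this
    exact @List.count_eq_one_of_mem _ instBEqOfDecidableEq _ _ _ (List.Nodup.of_map Subtype.val (hw ▸ g.nodup)) hu

end HCP

namespace HCP

lemma HP.glue {S1 S2 S : ℤ × ℤ → Prop} {s u v t : ℤ × ℤ}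
    (h1 : HP S1 s u) (h2 : HP S2 v t) (huv : A u v)
    (hdisj : ∀ p, S1 p → S2 p → False) (hS : ∀ p, S p ↔ S1 p ∨ S2 p) : HP S s t :=
  (h1.append h2 huv hdisj).congr (fun p => (hS p).symm)

/-- Hamiltonian connectivity of 2-row strips, ordered case. -/
lemma n2aux (M : ℤ) (a b c d : ℤ) (hac : a < c) (ha : 1 ≤ a) (hc : c ≤ M)
    (hb : b = 1 ∨ b = 2) (hd : d = 1 ∨ d = 2) :
    HC M 2 (a, b) (c, d) := by
  -- U-turn on columns 1..a : from (a,b) to (a,3-b)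
  have U1 : HP (fun p => 1 ≤ p.1 ∧ p.1 ≤ a ∧ 1 ≤ p.2 ∧ p.2 ≤ 2) (a, b) (a, 3 - b) := by
    refine HP.glue (leftHP b a 1 ha) (rightHP (3 - b) 1 a ha) ?_ ?_ ?_
    · exact adj_mk (by omega) (by omega) (by omega) (by omega) (by omega)
    · intro p h1 h2; omega
    · intro p; constructor
      · rintro ⟨h1, h2, h3, h4⟩; omega
      · rintro (⟨h1, h2, h3⟩ | ⟨h1, h2, h3⟩) <;> omega
  -- U-turn on columns c..M : from (c,3-d) to (c,d)
  have U2 : HP (fun p => c ≤ p.1 ∧ p.1 ≤ M ∧ 1 ≤ p.2 ∧ p.2 ≤ 2) (c, 3 - d) (c, d) := by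
    refine HP.glue (rightHP (3 - d) c M hc) (leftHP d M c hc) ?_ ?_ ?_
    · exact adj_mk (by omega) (by omega) (by omega) (by omega) (by omega)
    · intro p h1 h2; omega
    · intro p; constructor
      · rintro ⟨h1, h2, h3, h4⟩; omega
      · rintro (⟨h1, h2, h3⟩ | ⟨h1, h2, h3⟩) <;> omega
  by_cases hmid : a + 1 ≤ c - 1
  · -- middle snake on columns a+1 .. c-1
    have S : HP (fun p => a + 1 ≤ p.1 ∧ p.1 ≤ c - 1 ∧ 1 ≤ p.2 ∧ p.2 ≤ 2)
        (a + 1, d) (c - 1, 3 - d) := by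
      refine (snkHP d (3 - d) (a+1) (c-1) (by omega) (by omega) (by omega) (by omega)).congr ?_
      intro p; constructor
      · rintro ⟨h1, h2, h3⟩; omega
      · rintro ⟨h1, h2, h3, h4⟩; exact ⟨h1, h2, by omega⟩
    have L : HP (fun p => 1 ≤ p.1 ∧ p.1 ≤ c - 1 ∧ 1 ≤ p.2 ∧ p.2 ≤ 2) (a, b) (c - 1, 3 - d) := by
      refine HP.glue U1 S ?_ ?_ ?_
      · exact adj_mk (by omega) (by omega) (by omega) (by omega) (by omega)
      · intro p h1 h2; omega
      · intro p; constructor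
        · rintro ⟨h1, h2, h3, h4⟩; by_cases h : p.1 ≤ a
          · left; exact ⟨h1, h, h3, h4⟩
          · right; exact ⟨by omega, h2, h3, h4⟩
        · rintro (⟨h1, h2, h3, h4⟩ | ⟨h1, h2, h3, h4⟩) <;> exact ⟨by omega, by omega, h3, h4⟩
    refine HP.glue L U2 ?_ ?_ ?_
    · exact adj_mk (by omega) (by omega) (by omega) (by omega) (by omega)
    · intro p h1 h2; omega
    · intro p; unfold Box; constructor
      · rintro ⟨h1, h2, h3, h4⟩; by_cases h : p.1 ≤ c - 1
        · left; exact ⟨h1, h, h3, h4⟩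
        · right; exact ⟨by omega, h2, h3, h4⟩
      · rintro (⟨h1, h2, h3, h4⟩ | ⟨h1, h2, h3, h4⟩) <;> exact ⟨by omega, by omega, h3, h4⟩
  · -- c = a + 1
    refine HP.glue U1 U2 ?_ ?_ ?_
    · exact adj_mk (by omega) (by omega) (by omega) (by omega) (by omega)
    · intro p h1 h2; omega
    · intro p; unfold Box; constructor
      · rintro ⟨h1, h2, h3, h4⟩; by_cases h : p.1 ≤ a
        · left; exact ⟨h1, h, h3, h4⟩
        · right; exact ⟨by omega, h2, h3, h4⟩
      · rintro (⟨h1, h2, h3, h4⟩ | ⟨h1, h2, h3, h4⟩) <;> exact ⟨by omega, by omega, h3, h4⟩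

/-- Hamiltonian connectivity of 2-row strips. -/
lemma n2 (M : ℤ) (s t : ℤ × ℤ) (hs : Box M 2 s) (ht : Box M 2 t) (hst : s ≠ t)
    (c4 : ¬(s.1 = t.1 ∧ 1 < s.1 ∧ s.1 < M)) : HC M 2 s t := by
  obtain ⟨a, b⟩ := s
  obtain ⟨c, d⟩ := t
  simp only [Box] at hs ht
  simp only at c4
  obtain ⟨ha1, ha2, hb1, hb2⟩ := hs
  obtain ⟨hc1, hc2, hd1, hd2⟩ := ht
  rcases lt_trichotomy a c with h | h | h
  · exact n2aux M a b c d h ha1 hc2 (by omega) (by omega)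
  · -- a = c, so b ≠ d, {b,d} = {1,2}, and a = 1 ∨ a = M
    subst h
    have hbd : b ≠ d := fun hbd => hst (by rw [hbd])
    have haM : a = 1 ∨ a = M := by omega
    rcases haM with rfl | rfl
    · refine HP.glue (rightHP b 1 M (by omega)) (leftHP d M 1 (by omega))
        (adj_mk (by omega) (by omega) (by omega) (by omega) (by omega))
        (fun p h1 h2 => by omega) (fun p => ?_)
      unfold Box; constructor
      · rintro ⟨h1, h2, h3, h4⟩; by_cases h : p.2 = b
        · left; exact ⟨h, h1, h2⟩
        · right; exact ⟨by omega, h1, h2⟩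
      · rintro (⟨h1, h2, h3⟩ | ⟨h1, h2, h3⟩) <;> exact ⟨h2, h3, by omega, by omega⟩
    · refine HP.glue (leftHP b a 1 (by omega)) (rightHP d 1 a (by omega))
        (adj_mk (by omega) (by omega) (by omega) (by omega) (by omega))
        (fun p h1 h2 => by omega) (fun p => ?_)
      unfold Box; constructor
      · rintro ⟨h1, h2, h3, h4⟩; by_cases h : p.2 = b
        · left; exact ⟨h, h1, h2⟩
        · right; exact ⟨by omega, h1, h2⟩
      · rintro (⟨h1, h2, h3⟩ | ⟨h1, h2, h3⟩) <;> exact ⟨h2, h3, by omega, by omega⟩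
  · exact (n2aux M c d a b h hc1 ha2 (by omega) (by omega)).symm

end HCP

namespace HCP

def Cond (M N : ℤ) (s t : ℤ × ℤ) : Prop :=
  (M = 1 → (s.2 = 1 ∧ t.2 = N) ∨ (s.2 = N ∧ t.2 = 1)) ∧
  (N = 1 → (s.1 = 1 ∧ t.1 = M) ∨ (s.1 = M ∧ t.1 = 1)) ∧
  (M = 2 → ¬(s.2 = t.2 ∧ 1 < s.2 ∧ s.2 < N)) ∧
  (N = 2 → ¬(s.1 = t.1 ∧ 1 < s.1 ∧ s.1 < M))

def IHt (Ar : ℕ) : Prop := ∀ M N : ℤ, ∀ s t : ℤ × ℤ, (M * N).toNat ≤ Ar →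
  1 ≤ M → 1 ≤ N → Box M N s → Box M N t → s ≠ t → Cond M N s t → HC M N s t

lemma HP.endsCongr {S : ℤ × ℤ → Prop} {s t s' t' : ℤ × ℤ} (h : HP S s t)
    (hs : s = s') (ht : t = t') : HP S s' t' := hs ▸ ht ▸ h

lemma area_left {M N k : ℤ} {Ar' : ℕ} (hA : (M * N).toNat ≤ Ar' + 1) (hk1 : 0 ≤ k) (hk2 : k + 1 ≤ M)
    (hN : 1 ≤ N) : (k * N).toNat ≤ Ar' := by
  have hkey : k * N + N ≤ M * N := by
    calc k * N + N = (k + 1) * N := by ring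
    _ ≤ M * N := mul_le_mul_of_nonneg_right hk2 (by omega)
  omega

/-- vertical cut between columns k and k+1; s in the left part, t in the right part -/
lemma vcut (Ar : ℕ) (ih : IHt Ar) (M N k : ℤ) (hA : (M * N).toNat ≤ Ar + 1)
    (hM : 3 ≤ M) (hN : 3 ≤ N) (hk1 : 1 ≤ k) (hk2 : k + 1 ≤ M)
    (a b c d : ℤ) (ha1 : 1 ≤ a) (ha2 : a ≤ k) (hb : 1 ≤ b ∧ b ≤ N)
    (hc1 : k + 1 ≤ c) (hc2 : c ≤ M) (hd : 1 ≤ d ∧ d ≤ N)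
    (hL : k = 1 → b = 1 ∨ b = N) (hR : M - k = 1 → d = 1 ∨ d = N) :
    HC M N (a, b) (c, d) := by
  obtain ⟨y, y', h1, h2, h3, h4, h5, h6, h7, h8, h9, h10⟩ :
      ∃ y y', 1 ≤ y ∧ y ≤ N ∧ y ≠ b ∧ 1 ≤ y' ∧ y' ≤ N ∧ y' ≠ d ∧
        y - y' ≤ 1 ∧ y' - y ≤ 1 ∧
        (k = 1 → (b = 1 ∧ y = N) ∨ (b = N ∧ y = 1)) ∧
        (M - k = 1 → (y' = 1 ∧ d = N) ∨ (y' = N ∧ d = 1)) := by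
    by_cases hk : k = 1
    · rcases hL hk with rfl | rfl
      · exact ⟨N, if d = N then N - 1 else N, by split_ifs <;> omega⟩
      · exact ⟨1, if d = 1 then 2 else 1, by split_ifs <;> omega⟩
    · by_cases hk' : M - k = 1
      · rcases hR hk' with rfl | rfl
        · exact ⟨if b = N then N - 1 else N, N, by split_ifs <;> omega⟩
        · exact ⟨if b = 1 then 2 else 1, 1, by split_ifs <;> omega⟩
      · refine ⟨if b = 1 then 2 else 1, ?_, ?_⟩
        · exact if d = (if b = 1 then 2 else 1) then (if (if b = 1 then 2 else 1) = 1 then 2 else 1)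
            else (if b = 1 then 2 else 1)
        · split_ifs <;> omega
  -- left part
  have hleft : HP (Box k N) (a, b) (k, y) := by
    refine ih k N (a, b) (k, y) (area_left hA (by omega) hk2 (by omega)) (by omega) (by omega)
      (by exact ⟨ha1, ha2, hb.1, hb.2⟩) (by exact ⟨hk1, le_refl k, h1, h2⟩)
      (by rw [Ne, Prod.ext_iff]; simp only; omega) ?_
    exact ⟨fun h => h9 h, fun h => absurd h (by omega),
      fun h => by show ¬(b = y ∧ 1 < b ∧ b < N); omega, fun h => absurd h (by omega)⟩
  -- right part
  have hright0 : HC (M - k) N (1, y') (c - k, d) := by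
    refine ih (M - k) N (1, y') (c - k, d) ?_ (by omega) (by omega)
      (by exact ⟨le_refl 1, by omega, h4, h5⟩) (by exact ⟨by omega, by omega, hd.1, hd.2⟩)
      (by rw [Ne, Prod.ext_iff]; simp only; omega) ?_
    · have hkey : (M - k) * N + N ≤ M * N := by
        calc (M - k) * N + N = (M - k + 1) * N := by ring
        _ ≤ M * N := mul_le_mul_of_nonneg_right (by omega) (by omega)
      omega
    · exact ⟨fun h => h10 h, fun h => absurd h (by omega),
        fun h => by show ¬(y' = d ∧ 1 < y' ∧ y' < N); omega, fun h => absurd h (by omega)⟩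
  have hright : HP (fun p => k + 1 ≤ p.1 ∧ p.1 ≤ k + (M - k) ∧ 0 + 1 ≤ p.2 ∧ p.2 ≤ 0 + N)
      (k + 1, y') (c, d) := by
    refine (hright0.shift k 0).endsCongr ?_ ?_ <;> rw [Prod.ext_iff] <;> constructor <;>
      simp only <;> omega
  refine HP.glue hleft hright (adj_mk (by omega) (by omega) (by omega) (by omega) (by omega))
    (fun p hp1 hp2 => ?_) (fun p => ?_)
  · exact absurd hp2.1 (by have := hp1.2.1; omega)
  · unfold Box; constructor
    · rintro ⟨g1, g2, g3, g4⟩; by_cases h : p.1 ≤ k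
      · left; exact ⟨g1, h, g3, g4⟩
      · right; exact ⟨by omega, by omega, by omega, by omega⟩
    · rintro (⟨g1, g2, g3, g4⟩ | ⟨g1, g2, g3, g4⟩) <;> exact ⟨by omega, by omega, by omega, by omega⟩

end HCP

namespace HCP

lemma singleHP (x y : ℤ) : HP (fun p => p.1 = x ∧ p.2 = y) (x, y) (x, y) :=
  (HP.single _).congr (fun p => by rw [Prod.ext_iff])

lemma area_lt {M N M' N' : ℤ} {Ar : ℕ} (hA : (M * N).toNat ≤ Ar + 1) (h1 : 1 ≤ M')
    (h2 : M' ≤ M) (h3 : 1 ≤ N') (h4 : N' ≤ N) (h5 : M' < M ∨ N' < N) :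
    (M' * N').toNat ≤ Ar := by
  rcases h5 with h5 | h5
  · have e1 : M' * N' ≤ (M - 1) * N' := mul_le_mul_of_nonneg_right (by omega) (by omega)
    have e2 : (M - 1) * N' ≤ (M - 1) * N := mul_le_mul_of_nonneg_left (by omega) (by omega)
    have e3 : (M - 1) * N = M * N - N := by ring
    omega
  · have e1 : M' * N' ≤ M' * (N - 1) := mul_le_mul_of_nonneg_left (by omega) (by omega)
    have e2 : M' * (N - 1) ≤ M * (N - 1) := mul_le_mul_of_nonneg_right (by omega) (by omega)
    have e3 : M * (N - 1) = M * N - M := by ring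
    omega

/-- the block consisting of columns 2..M and rows 3..N, traversed from (2,N) to (M,3) -/
lemma blkA (Ar : ℕ) (ih : IHt Ar) (M N : ℤ) (hA : (M * N).toNat ≤ Ar + 1)
    (hM : 3 ≤ M) (hN : 3 ≤ N) :
    HP (fun p => 2 ≤ p.1 ∧ p.1 ≤ M ∧ 3 ≤ p.2 ∧ p.2 ≤ N) (2, N) (M, 3) := by
  have h0 : HC (M - 1) (N - 2) (1, N - 2) (M - 1, 1) := by
    refine ih (M - 1) (N - 2) (1, N - 2) (M - 1, 1)
      (area_lt hA (by omega) (by omega) (by omega) (by omega) (by omega)) (by omega) (by omega)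
      (by exact ⟨by omega, by omega, by omega, by omega⟩)
      (by exact ⟨by omega, by omega, by omega, by omega⟩)
      (by rw [Ne, Prod.ext_iff]; simp only; omega) ?_
    exact ⟨fun h => absurd h (by omega), fun h => Or.inl ⟨rfl, rfl⟩,
      fun h => by show ¬(N - 2 = 1 ∧ 1 < N - 2 ∧ N - 2 < N - 2); omega,
      fun h => by show ¬((1:ℤ) = M - 1 ∧ 1 < (1:ℤ) ∧ (1:ℤ) < M - 1); omega⟩
  refine ((h0.shift 1 2).endsCongr ?_ ?_).congr (fun p => ?_)
  · rw [Prod.ext_iff]; constructor <;> simp only <;> omega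
  · rw [Prod.ext_iff]; constructor <;> simp only <;> omega
  · constructor <;> rintro ⟨u1, u2, u3, u4⟩ <;> exact ⟨by omega, by omega, by omega, by omega⟩

/-- Type III: s = (1,b), t = (2,b), b interior. -/
lemma typeIII (Ar : ℕ) (ih : IHt Ar) (M N : ℤ) (hA : (M * N).toNat ≤ Ar + 1)
    (hM : 3 ≤ M) (hN : 3 ≤ N) (b : ℤ) (hb1 : 1 < b) (hb2 : b < N) :
    HC M N (1, b) (2, b) := by
  by_cases hb : b = 2
  · subst hb
    -- col 1 up, block A, snake down to (3,1), then (2,1),(1,1),(2,2)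
    have P1 := upHP 1 2 N (by omega)
    have S2 := blkA Ar ih M N hA hM hN
    have G1 : HP (fun p => (p.1 = 1 ∧ 2 ≤ p.2 ∧ p.2 ≤ N) ∨
        (2 ≤ p.1 ∧ p.1 ≤ M ∧ 3 ≤ p.2 ∧ p.2 ≤ N)) (1, 2) (M, 3) :=
      P1.append S2 (adj_mk (by omega) (by omega) (by omega) (by omega) (by omega))
        (fun p q1 q2 => by omega)
    have S3 : HP (fun p => 3 ≤ p.1 ∧ p.1 ≤ M ∧ (p.2 = 1 ∨ p.2 = 2)) (M, 2) (3, 1) :=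
      (snkHP 1 2 3 M (by omega) (by omega) (by omega) (by omega)).reverse
    have G2 := G1.append S3 (adj_mk (by omega) (by omega) (by omega) (by omega) (by omega))
      (fun p q1 q2 => by rcases q1 with q1 | q1 <;> omega)
    have G3 := G2.append (singleHP 2 1)
      (adj_mk (by omega) (by omega) (by omega) (by omega) (by omega))
      (fun p q1 q2 => by rcases q1 with (q1 | q1) | q1 <;> omega)
    have G4 := G3.append (singleHP 1 1)
      (adj_mk (by omega) (by omega) (by omega) (by omega) (by omega))
      (fun p q1 q2 => by rcases q1 with ((q1 | q1) | q1) | q1 <;> omega)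
    have G5 := G4.append (singleHP 2 2)
      (adj_mk (by omega) (by omega) (by omega) (by omega) (by omega))
      (fun p q1 q2 => by rcases q1 with (((q1 | q1) | q1) | q1) | q1 <;> omega)
    refine G5.congr (fun p => ?_)
    unfold Box; constructor
    · rintro ((((q | q) | q) | q) | q) <;>
        exact ⟨by omega, by omega, by omega, by omega⟩
    · rintro ⟨u1, u2, u3, u4⟩
      by_cases e1 : p.1 = 1 ∧ 2 ≤ p.2
      · exact Or.inl (Or.inl (Or.inl (Or.inl (Or.inl ⟨e1.1, e1.2, u4⟩))))
      by_cases e2 : 2 ≤ p.1 ∧ 3 ≤ p.2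
      · exact Or.inl (Or.inl (Or.inl (Or.inl (Or.inr ⟨e2.1, u2, e2.2, u4⟩))))
      by_cases e3 : 3 ≤ p.1
      · exact Or.inl (Or.inl (Or.inl (Or.inr ⟨e3, u2, by omega⟩)))
      by_cases e4 : p.1 = 2 ∧ p.2 = 1
      · exact Or.inl (Or.inl (Or.inr e4))
      by_cases e5 : p.1 = 1 ∧ p.2 = 1
      · exact Or.inl (Or.inr e5)
      · exact Or.inr ⟨by omega, by omega⟩
  · -- b ≥ 3
    have hb3 : 3 ≤ b := by omega
    have P1 := upHP 1 b N (by omega)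
    -- block cols 2..M rows b+1..N from (2,N) to (M,b+1)
    have S2 : HP (fun p => 2 ≤ p.1 ∧ p.1 ≤ M ∧ b + 1 ≤ p.2 ∧ p.2 ≤ N) (2, N) (M, b + 1) := by
      have h0 : HC (M - 1) (N - b) (1, N - b) (M - 1, 1) := by
        refine ih (M - 1) (N - b) (1, N - b) (M - 1, 1)
          (area_lt hA (by omega) (by omega) (by omega) (by omega) (by omega)) (by omega) (by omega)
          (by exact ⟨by omega, by omega, by omega, by omega⟩)
          (by exact ⟨by omega, by omega, by omega, by omega⟩)
          (by rw [Ne, Prod.ext_iff]; simp only; omega) ?_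
        exact ⟨fun h => absurd h (by omega), fun h => Or.inl ⟨rfl, rfl⟩,
          fun h => by show ¬(N - b = 1 ∧ 1 < N - b ∧ N - b < N - b); omega,
          fun h => by show ¬((1:ℤ) = M - 1 ∧ 1 < (1:ℤ) ∧ (1:ℤ) < M - 1); omega⟩
      refine ((h0.shift 1 b).endsCongr ?_ ?_).congr (fun p => ?_)
      · rw [Prod.ext_iff]; constructor <;> simp only <;> omega
      · rw [Prod.ext_iff]; constructor <;> simp only <;> omega
      · constructor <;> rintro ⟨u1, u2, u3, u4⟩ <;> exact ⟨by omega, by omega, by omega, by omega⟩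
    have G1 := P1.append S2 (adj_mk (by omega) (by omega) (by omega) (by omega) (by omega))
      (fun p q1 q2 => by omega)
    have S3 := leftHP b M 3 (by omega)
    have G2 := G1.append S3 (adj_mk (by omega) (by omega) (by omega) (by omega) (by omega))
      (fun p q1 q2 => by rcases q1 with q1 | q1 <;> omega)
    -- bottom block cols 1..M rows 1..b-1 from (2,b-1) to (1,b-1)
    have S4 : HP (fun p => 1 ≤ p.1 ∧ p.1 ≤ M ∧ 1 ≤ p.2 ∧ p.2 ≤ b - 1) (2, b - 1) (1, b - 1) := by
      refine (ih M (b - 1) (2, b - 1) (1, b - 1)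
        (area_lt hA (by omega) (by omega) (by omega) (by omega) (by omega)) (by omega) (by omega)
        (by exact ⟨by omega, by omega, by omega, by omega⟩)
        (by exact ⟨by omega, by omega, by omega, by omega⟩)
        (by rw [Ne, Prod.ext_iff]; simp only; omega) ?_).congr (fun p => Iff.rfl)
      exact ⟨fun h => absurd h (by omega), fun h => absurd h (by omega),
        fun h => absurd h (by omega),
        fun h => by show ¬((2:ℤ) = 1 ∧ 1 < (2:ℤ) ∧ (2:ℤ) < M); omega⟩
    have G3 := G2.append S4 (adj_mk (by omega) (by omega) (by omega) (by omega) (by omega))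
      (fun p q1 q2 => by rcases q1 with (q1 | q1) | q1 <;> omega)
    have G4 := G3.append (singleHP 2 b)
      (adj_mk (by omega) (by omega) (by omega) (by omega) (by omega))
      (fun p q1 q2 => by rcases q1 with ((q1 | q1) | q1) | q1 <;> omega)
    refine G4.congr (fun p => ?_)
    unfold Box; constructor
    · rintro (((q | q) | q) | q) <;> exact ⟨by omega, by omega, by omega, by omega⟩
    · rintro ⟨u1, u2, u3, u4⟩
      by_cases e1 : p.1 = 1 ∧ b ≤ p.2
      · exact Or.inl (Or.inl (Or.inl (Or.inl ⟨e1.1, e1.2, u4⟩)))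
      by_cases e2 : 2 ≤ p.1 ∧ b + 1 ≤ p.2
      · exact Or.inl (Or.inl (Or.inl (Or.inr ⟨e2.1, u2, e2.2, u4⟩)))
      by_cases e3 : 3 ≤ p.1 ∧ p.2 = b
      · exact Or.inl (Or.inl (Or.inr ⟨e3.2, e3.1, u2⟩))
      by_cases e4 : p.2 ≤ b - 1
      · exact Or.inl (Or.inr ⟨u1, u2, u3, e4⟩)
      · exact Or.inr ⟨by omega, by omega⟩
  done

end HCP

namespace HCP

/-- Type IV: s = (1,2), t = (2,1). -/
lemma typeIV (Ar : ℕ) (ih : IHt Ar) (M N : ℤ) (hA : (M * N).toNat ≤ Ar + 1)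
    (hM : 3 ≤ M) (hN : 3 ≤ N) : HC M N (1, 2) (2, 1) := by
  have P1 := upHP 1 2 N (by omega)
  have S2 := blkA Ar ih M N hA hM hN
  have G1 : HP (fun p => (p.1 = 1 ∧ 2 ≤ p.2 ∧ p.2 ≤ N) ∨
      (2 ≤ p.1 ∧ p.1 ≤ M ∧ 3 ≤ p.2 ∧ p.2 ≤ N)) (1, 2) (M, 3) :=
    P1.append S2 (adj_mk (by omega) (by omega) (by omega) (by omega) (by omega))
      (fun p q1 q2 => by omega)
  have S3 : HP (fun p => 3 ≤ p.1 ∧ p.1 ≤ M ∧ (p.2 = 1 ∨ p.2 = 2)) (M, 2) (3, 1) :=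
    (snkHP 1 2 3 M (by omega) (by omega) (by omega) (by omega)).reverse
  have G2 := G1.append S3 (adj_mk (by omega) (by omega) (by omega) (by omega) (by omega))
    (fun p q1 q2 => by rcases q1 with q1 | q1 <;> omega)
  have G3 := G2.append (singleHP 2 2)
    (adj_mk (by omega) (by omega) (by omega) (by omega) (by omega))
    (fun p q1 q2 => by rcases q1 with (q1 | q1) | q1 <;> omega)
  have G4 := G3.append (singleHP 1 1)
    (adj_mk (by omega) (by omega) (by omega) (by omega) (by omega))
    (fun p q1 q2 => by rcases q1 with ((q1 | q1) | q1) | q1 <;> omega)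
  have G5 := G4.append (singleHP 2 1)
    (adj_mk (by omega) (by omega) (by omega) (by omega) (by omega))
    (fun p q1 q2 => by rcases q1 with (((q1 | q1) | q1) | q1) | q1 <;> omega)
  refine G5.congr (fun p => ?_)
  unfold Box; constructor
  · rintro ((((q | q) | q) | q) | q) <;> exact ⟨by omega, by omega, by omega, by omega⟩
  · rintro ⟨u1, u2, u3, u4⟩
    by_cases e1 : p.1 = 1 ∧ 2 ≤ p.2
    · exact Or.inl (Or.inl (Or.inl (Or.inl (Or.inl ⟨e1.1, e1.2, u4⟩))))
    by_cases e2 : 2 ≤ p.1 ∧ 3 ≤ p.2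
    · exact Or.inl (Or.inl (Or.inl (Or.inl (Or.inr ⟨e2.1, u2, e2.2, u4⟩))))
    by_cases e3 : 3 ≤ p.1
    · exact Or.inl (Or.inl (Or.inl (Or.inr ⟨e3, u2, by omega⟩)))
    by_cases e4 : p.1 = 2 ∧ p.2 = 2
    · exact Or.inl (Or.inl (Or.inr e4))
    by_cases e5 : p.1 = 1 ∧ p.2 = 1
    · exact Or.inl (Or.inr e5)
    · exact Or.inr ⟨by omega, by omega⟩

/-- Type V: M = 3, s = (1,b), t = (3,b), b interior. -/
lemma typeV (Ar : ℕ) (ih : IHt Ar) (N : ℤ) (hA : ((3:ℤ) * N).toNat ≤ Ar + 1)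
    (hN : 3 ≤ N) (b : ℤ) (hb1 : 1 < b) (hb2 : b < N) : HC 3 N (1, b) (3, b) := by
  have P1 := upHP 1 b N (by omega)
  have S2 : HP (fun p => 2 ≤ p.1 ∧ p.1 ≤ 3 ∧ b + 1 ≤ p.2 ∧ p.2 ≤ N) (2, N) (3, b + 1) := by
    have h0 : HC 2 (N - b) (1, N - b) (2, 1) := by
      refine ih 2 (N - b) (1, N - b) (2, 1)
        (area_lt hA (by omega) (by omega) (by omega) (by omega) (by omega)) (by omega) (by omega)
        (by exact ⟨by omega, by omega, by omega, by omega⟩)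
        (by exact ⟨by omega, by omega, by omega, by omega⟩)
        (by rw [Ne, Prod.ext_iff]; simp only; omega) ?_
      exact ⟨fun h => absurd h (by omega), fun h => Or.inl ⟨rfl, rfl⟩,
        fun h => by show ¬(N - b = 1 ∧ 1 < N - b ∧ N - b < N - b); omega,
        fun h => by show ¬((1:ℤ) = 2 ∧ 1 < (1:ℤ) ∧ (1:ℤ) < 2); omega⟩
    refine ((h0.shift 1 b).endsCongr ?_ ?_).congr (fun p => ?_)
    · rw [Prod.ext_iff]; constructor <;> simp only <;> omega
    · rw [Prod.ext_iff]; constructor <;> simp only <;> omega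
    · constructor <;> rintro ⟨u1, u2, u3, u4⟩ <;> exact ⟨by omega, by omega, by omega, by omega⟩
  have G1 : HP (fun p => (p.1 = 1 ∧ b ≤ p.2 ∧ p.2 ≤ N) ∨
      (2 ≤ p.1 ∧ p.1 ≤ 3 ∧ b + 1 ≤ p.2 ∧ p.2 ≤ N)) (1, b) (3, b + 1) :=
    P1.append S2 (adj_mk (by omega) (by omega) (by omega) (by omega) (by omega))
      (fun p q1 q2 => by omega)
  have G2 := G1.append (singleHP 2 b)
    (adj_mk (by omega) (by omega) (by omega) (by omega) (by omega))
    (fun p q1 q2 => by rcases q1 with q1 | q1 <;> omega)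
  have P3 := downHP 1 (b - 1) 1 (by omega)
  have G3 := G2.append P3 (adj_mk (by omega) (by omega) (by omega) (by omega) (by omega))
    (fun p q1 q2 => by rcases q1 with (q1 | q1) | q1 <;> omega)
  have S4 : HP (fun p => 2 ≤ p.1 ∧ p.1 ≤ 3 ∧ 1 ≤ p.2 ∧ p.2 ≤ b - 1) (2, 1) (3, b - 1) := by
    have h0 : HC 2 (b - 1) (1, 1) (2, b - 1) := by
      refine ih 2 (b - 1) (1, 1) (2, b - 1)
        (area_lt hA (by omega) (by omega) (by omega) (by omega) (by omega)) (by omega) (by omega)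
        (by exact ⟨by omega, by omega, by omega, by omega⟩)
        (by exact ⟨by omega, by omega, by omega, by omega⟩)
        (by rw [Ne, Prod.ext_iff]; simp only; omega) ?_
      exact ⟨fun h => absurd h (by omega), fun h => Or.inl ⟨rfl, rfl⟩,
        fun h => by show ¬((1:ℤ) = b - 1 ∧ 1 < (1:ℤ) ∧ (1:ℤ) < b - 1); omega,
        fun h => by show ¬((1:ℤ) = 2 ∧ 1 < (1:ℤ) ∧ (1:ℤ) < 2); omega⟩
    refine ((h0.shift 1 0).endsCongr ?_ ?_).congr (fun p => ?_)
    · rw [Prod.ext_iff]; constructor <;> simp only <;> omega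
    · rw [Prod.ext_iff]; constructor <;> simp only <;> omega
    · constructor <;> rintro ⟨u1, u2, u3, u4⟩ <;> exact ⟨by omega, by omega, by omega, by omega⟩
  have G4 := G3.append S4 (adj_mk (by omega) (by omega) (by omega) (by omega) (by omega))
    (fun p q1 q2 => by rcases q1 with ((q1 | q1) | q1) | q1 <;> omega)
  have G5 := G4.append (singleHP 3 b)
    (adj_mk (by omega) (by omega) (by omega) (by omega) (by omega))
    (fun p q1 q2 => by rcases q1 with (((q1 | q1) | q1) | q1) | q1 <;> omega)
  refine G5.congr (fun p => ?_)
  unfold Box; constructor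
  · rintro ((((q | q) | q) | q) | q) <;> exact ⟨by omega, by omega, by omega, by omega⟩
  · rintro ⟨u1, u2, u3, u4⟩
    by_cases e1 : p.1 = 1 ∧ b ≤ p.2
    · exact Or.inl (Or.inl (Or.inl (Or.inl (Or.inl ⟨e1.1, e1.2, u4⟩))))
    by_cases e2 : 2 ≤ p.1 ∧ b + 1 ≤ p.2
    · exact Or.inl (Or.inl (Or.inl (Or.inl (Or.inr ⟨e2.1, u2, e2.2, u4⟩))))
    by_cases e3 : p.1 = 2 ∧ p.2 = b
    · exact Or.inl (Or.inl (Or.inl (Or.inr e3)))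
    by_cases e4 : p.1 = 1
    · exact Or.inl (Or.inl (Or.inr ⟨e4, u3, by omega⟩))
    by_cases e5 : p.2 ≤ b - 1
    · exact Or.inl (Or.inr ⟨by omega, u2, u3, e5⟩)
    · exact Or.inr ⟨by omega, by omega⟩

end HCP

namespace HCP

/-- s = (1,b), t = (2,d) with M,N ≥ 3: always Hamiltonian connected. -/
lemma edgePair (Ar : ℕ) (ih : IHt Ar) (M N : ℤ) (hA : (M * N).toNat ≤ Ar + 1)
    (hM : 3 ≤ M) (hN : 3 ≤ N) (b d : ℤ) (hb1 : 1 ≤ b) (hb2 : b ≤ N)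
    (hd1 : 1 ≤ d) (hd2 : d ≤ N) : HC M N (1, b) (2, d) := by
  have hA' : (N * M).toNat ≤ Ar + 1 := by rw [mul_comm]; exact hA
  by_cases hbb : b = 1 ∨ b = N
  · exact vcut Ar ih M N 1 hA hM hN (by omega) (by omega) 1 b 2 d (by omega) (by omega)
      (by omega) (by omega) (by omega) (by omega) (fun _ => hbb) (fun h => absurd h (by omega))
  · push_neg at hbb
    by_cases hdb : d = b
    · subst hdb; exact typeIII Ar ih M N hA hM hN d (by omega) (by omega)
    · by_cases h21 : b = 2 ∧ d = 1
      · rw [h21.1, h21.2]; exact typeIV Ar ih M N hA hM hN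
      · by_cases hNN : b = N - 1 ∧ d = N
        · refine ((typeIV Ar ih M N hA hM hN).reflY).endsCongr ?_ ?_ <;>
            rw [Prod.ext_iff] <;> constructor <;> simp only <;> omega
        · -- transpose and cut vertically in the transposed board
          have key : HC N M (b, 1) (d, 2) := by
            by_cases hdN : d = N
            · exact vcut Ar ih N M b hA' hN hM (by omega) (by omega) b 1 d 2 (by omega)
                (by omega) (by omega) (by omega) (by omega) (by omega)
                (fun h => absurd h (by omega)) (fun h => absurd h (by omega))
            · by_cases hd1' : d = 1
              · subst hd1'
                exact (vcut Ar ih N M (b - 1) hA' hN hM (by omega) (by omega) 1 2 b 1 (by omega)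
                  (by omega) (by omega) (by omega) (by omega) (by omega)
                  (fun h => absurd h (by omega)) (fun _ => Or.inl rfl)).symm
              · rcases lt_or_gt_of_ne hdb with hlt | hgt
                · -- d < b
                  refine (vcut Ar ih N M (b - 1) hA' hN hM ?_ ?_ d 2 b 1 ?_ ?_ ?_ ?_ ?_ ?_
                    (fun h => absurd h ?_) (fun _ => Or.inl rfl)).symm <;> omega
                · -- b < d
                  refine vcut Ar ih N M (d - 1) hA' hN hM ?_ ?_ b 1 d 2 ?_ ?_ ?_ ?_ ?_ ?_
                    (fun _ => Or.inl rfl) (fun h => absurd h ?_) <;> omega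
          exact key.transpose

end HCP

namespace HCP

/-- main step for boards with both sides ≥ 3 and s.1 < t.1 -/
lemma step2aux (Ar : ℕ) (ih : IHt Ar) (M N : ℤ) (hA : (M * N).toNat ≤ Ar + 1)
    (hM : 3 ≤ M) (hN : 3 ≤ N) (a b c d : ℤ) (ha1 : 1 ≤ a) (hb1 : 1 ≤ b) (hb2 : b ≤ N)
    (hc2 : c ≤ M) (hd1 : 1 ≤ d) (hd2 : d ≤ N) (hac : a < c) : HC M N (a, b) (c, d) := by
  have hA' : (N * M).toNat ≤ Ar + 1 := by rw [mul_comm]; exact hA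
  by_cases h1 : 3 ≤ c ∧ c ≤ M - 1
  · exact vcut Ar ih M N (c - 1) hA hM hN (by omega) (by omega) a b c d (by omega) (by omega)
      (by omega) (by omega) (by omega) (by omega)
      (fun h => absurd h (by omega)) (fun h => absurd h (by omega))
  · by_cases h2 : c = 2
    · obtain rfl : a = 1 := by omega
      subst h2
      exact edgePair Ar ih M N hA hM hN b d hb1 hb2 hd1 hd2
    · have hcM : c = M := by omega
      subst c
      by_cases h3 : 2 ≤ a ∧ a ≤ M - 2
      · exact vcut Ar ih M N a hA hM hN (by omega) (by omega) a b M d (by omega) (by omega)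
          (by omega) (by omega) (by omega) (by omega)
          (fun h => absurd h (by omega)) (fun h => absurd h (by omega))
      · by_cases h4 : a = 1 ∧ 4 ≤ M
        · obtain ⟨rfl, hM4⟩ := h4
          exact vcut Ar ih M N 2 hA hM hN (by omega) (by omega) 1 b M d (by omega) (by omega)
            (by omega) (by omega) (by omega) (by omega)
            (fun h => absurd h (by omega)) (fun h => absurd h (by omega))
        · by_cases h5 : a = 1 ∧ M = 3
          · obtain ⟨rfl, rfl⟩ := h5
            by_cases h6 : b = 1 ∨ b = N
            · exact vcut Ar ih 3 N 1 hA hM hN (by omega) (by omega) 1 b 3 d (by omega) (by omega)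
                (by omega) (by omega) (by omega) (by omega)
                (fun _ => h6) (fun h => absurd h (by omega))
            · by_cases h7 : d = 1 ∨ d = N
              · exact vcut Ar ih 3 N 2 hA hM hN (by omega) (by omega) 1 b 3 d (by omega)
                  (by omega) (by omega) (by omega) (by omega) (by omega)
                  (fun h => absurd h (by omega)) (fun _ => h7)
              · push_neg at h6 h7
                by_cases h8 : b = d
                · subst h8
                  exact typeV Ar ih N hA hN b (by omega) (by omega)
                · rcases lt_or_gt_of_ne h8 with hlt | hgt
                  · -- b < d : transposed board, cut at d-1
                    exact (vcut Ar ih N 3 (d - 1) hA' hN (by omega) (by omega) (by omega)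
                      b 1 d 3 (by omega) (by omega) (by omega) (by omega) (by omega) (by omega)
                      (fun h => absurd h (by omega)) (fun h => absurd h (by omega))).transpose
                  · -- d < b
                    exact ((vcut Ar ih N 3 (b - 1) hA' hN (by omega) (by omega) (by omega)
                      d 3 b 1 (by omega) (by omega) (by omega) (by omega) (by omega) (by omega)
                      (fun h => absurd h (by omega)) (fun h => absurd h (by omega))).symm).transpose
          · have ha9 : a = M - 1 := by omega
            by_cases h9 : d = 1 ∨ d = N
            · exact vcut Ar ih M N (M - 1) hA hM hN (by omega) (by omega) a b M d (by omega)
                (by omega) (by omega) (by omega) (by omega) (by omega)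
                (fun h => absurd h (by omega)) (fun _ => h9)
            · push_neg at h9
              refine (((edgePair Ar ih M N hA hM hN d b hd1 hd2 hb1 hb2).symm).reflX).endsCongr
                ?_ ?_ <;> rw [Prod.ext_iff] <;> constructor <;> simp only <;> omega

/-- the full induction -/
theorem mainIH : ∀ Ar : ℕ, IHt Ar := by
  intro Ar
  induction Ar with
  | zero =>
    intro M N s t hA hM hN hs ht hst hc
    have : 0 < M * N := mul_pos (by omega) (by omega)
    omega
  | succ n ihn =>
    intro M N s t hA hM hN hs ht hst hc
    obtain ⟨a, b⟩ := s
    obtain ⟨c, d⟩ := t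
    simp only [Box] at hs ht
    obtain ⟨ha1, ha2, hb1, hb2⟩ := hs
    obtain ⟨hc1, hc2, hd1, hd2⟩ := ht
    have hA' : (N * M).toNat ≤ n + 1 := by rw [mul_comm]; exact hA
    by_cases hM1 : M = 1
    · subst hM1
      obtain rfl : a = 1 := by omega
      obtain rfl : c = 1 := by omega
      rcases hc.1 rfl with ⟨hb', hd'⟩ | ⟨hb', hd'⟩
      · refine (((upHP 1 1 N (by omega)).congr (fun p => by unfold Box; omega)).endsCongr
          ?_ ?_) <;> rw [Prod.ext_iff] <;> constructor <;> simp only at * <;> omega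
      · refine (((downHP 1 N 1 (by omega)).congr (fun p => by unfold Box; omega)).endsCongr
          ?_ ?_) <;> rw [Prod.ext_iff] <;> constructor <;> simp only at * <;> omega
    · by_cases hN1 : N = 1
      · subst hN1
        obtain rfl : b = 1 := by omega
        obtain rfl : d = 1 := by omega
        rcases hc.2.1 rfl with ⟨ha', hc'⟩ | ⟨ha', hc'⟩
        · refine (((rightHP 1 1 M (by omega)).congr (fun p => by unfold Box; omega)).endsCongr
            ?_ ?_) <;> rw [Prod.ext_iff] <;> constructor <;> simp only at * <;> omega
        · refine (((leftHP 1 M 1 (by omega)).congr (fun p => by unfold Box; omega)).endsCongr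
            ?_ ?_) <;> rw [Prod.ext_iff] <;> constructor <;> simp only at * <;> omega
      · by_cases hM2 : M = 2
        · subst hM2
          have h := n2 N (b, a) (d, c) (by exact ⟨hb1, hb2, ha1, ha2⟩)
            (by exact ⟨hd1, hd2, hc1, hc2⟩)
            (by rw [Ne, Prod.ext_iff] at hst ⊢; simp only at hst ⊢; tauto)
            (by have := hc.2.2.1 rfl; simp only at this ⊢; exact this)
          exact h.transpose
        · by_cases hN2 : N = 2
          · subst hN2
            exact n2 M (a, b) (c, d) (by exact ⟨ha1, ha2, hb1, hb2⟩)
              (by exact ⟨hc1, hc2, hd1, hd2⟩) hst (hc.2.2.2 rfl)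
          · have hM3 : 3 ≤ M := by omega
            have hN3 : 3 ≤ N := by omega
            rcases lt_trichotomy a c with h | h | h
            · exact step2aux n ihn M N hA hM3 hN3 a b c d ha1 hb1 hb2 hc2 hd1 hd2 h
            · -- a = c, transpose
              subst h
              have hbd : b ≠ d := by
                intro hbd; exact hst (by rw [hbd])
              rcases lt_or_gt_of_ne hbd with hlt | hgt
              · exact (step2aux n ihn N M hA' hN3 hM3 b a d a hb1 ha1 ha2 hd2 ha1 ha2
                  hlt).transpose
              · exact (((step2aux n ihn N M hA' hN3 hM3 d a b a hd1 ha1 ha2 hb2 ha1 ha2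
                  hgt).symm).transpose)
            · exact (step2aux n ihn M N hA hM3 hN3 c d a b hc1 hd1 hd2 ha2 hb1 hb2 h).symm

end HCP

/-- For m ≥ n ≥ 3, R(m,n) is Hamiltonian connected. -/
theorem stmt_19 (m n : ℤ) (hn : 3 ≤ n) (hmn : n ≤ m) :
    ∀ s t : RectSet m n, s ≠ t →
      ∃ w : (Rect m n).Walk s t, w.IsPath ∧ w.IsHamiltonian := by
  intro s t hst
  apply HCP.exists_walk
  refine HCP.mainIH ((m * n).toNat) m n s.val t.val (le_refl _) (by omega) (by omega)
    s.property t.property (fun h => hst (Subtype.ext h)) ?_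
  exact ⟨fun h => absurd h (by omega), fun h => absurd h (by omega),
    fun h => absurd h (by omega), fun h => absurd h (by omega)⟩
end
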